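/- Let F ∈ 𝒜 and K ∈ 𝒜⁰ with F ∩ K ≠ K and P^j_*(K) = 0. Put I₂ := {i ∈ I : H_i ∩ F ∩ K ≠ ∅ and H_i ∩ F^c ∩ K ≠ ∅} and I₃ := {i ∈ I : H_i ∩ F ∩ K = ∅ and H_i ∩ F^c ∩ K ≠ ∅}. If I₂ ≠ ∅, I₃ = ∅, I₂ is finite, and σ(K|H_i) > 0 for every i ∈ I₂, then P_*(F|K) = min_{i∈I₂} σ(F∩K|H_i)/σ(K|H_i); in every other case P_*(F|K) = 0. -/

import Mathlib

open Set

open scoped Classical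

variable {Ω : Type*}

/-- A field of sets on `Ω`: contains `univ`, closed under complements and finite unions. -/
def IsSetField (𝒜 : Set (Set Ω)) : Prop :=
  Set.univ ∈ 𝒜 ∧ (∀ A ∈ 𝒜, Aᶜ ∈ 𝒜) ∧ ∀ A ∈ 𝒜, ∀ B ∈ 𝒜, A ∪ B ∈ 𝒜

/-- A finitely additive probability on the field `𝒜`. -/
def IsFAP (𝒜 : Set (Set Ω)) (P : Set Ω → ℝ) : Prop :=
  (∀ A ∈ 𝒜, 0 ≤ P A ∧ P A ≤ 1) ∧ P Set.univ = 1 ∧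
    ∀ A ∈ 𝒜, ∀ B ∈ 𝒜, Disjoint A B → P (A ∪ B) = P A + P B

/-- A partition of `Ω` into nonempty pairwise disjoint pieces. -/
def IsPartition {ι : Type*} (H : ι → Set Ω) : Prop :=
  (∀ i, (H i).Nonempty) ∧ (Pairwise fun i j => Disjoint (H i) (H j)) ∧
    (⋃ i, H i) = Set.univ

/-- A field containing every member of the partition `H` and whose members are
unions of members of the partition. -/
def IsFieldOver {ι : Type*} (H : ι → Set Ω) (𝒜L : Set (Set Ω)) : Prop :=
  IsSetField 𝒜L ∧ (∀ i, H i ∈ 𝒜L) ∧ ∀ A ∈ 𝒜L, ∃ S : Set ι, A = ⋃ i ∈ S, H i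

/-- A field containing `𝒜L ∪ 𝒜E` whose members are unions of the atoms `H i ∩ E j`. -/
def IsJointField {ι κ : Type*} (H : ι → Set Ω) (E : κ → Set Ω)
    (𝒜L 𝒜E 𝒜 : Set (Set Ω)) : Prop :=
  IsSetField 𝒜 ∧ 𝒜L ⊆ 𝒜 ∧ 𝒜E ⊆ 𝒜 ∧
    ∀ A ∈ 𝒜, ∃ S : Set (ι × κ), A = ⋃ p ∈ S, H p.1 ∩ E p.2

/-- A strategy on `𝒜 × ℒ`: each `σ (·|H i)` is a finitely additive probability on `𝒜`
equal to `1` on events implied by `H i`. -/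
def IsStrategy {ι : Type*} (𝒜 : Set (Set Ω)) (H : ι → Set Ω) (σ : Set Ω → ι → ℝ) : Prop :=
  ∀ i, IsFAP 𝒜 (fun F => σ F i) ∧ ∀ F ∈ 𝒜, H i ⊆ F → σ F i = 1

/-- A full conditional probability on the field `𝒜` (conditions (C1), (C2), (C3)). -/
def IsFCP (𝒜 : Set (Set Ω)) (P : Set Ω → Set Ω → ℝ) : Prop :=
  (∀ E ∈ 𝒜, ∀ K ∈ 𝒜, K.Nonempty → P E K = P (E ∩ K) K) ∧
  (∀ K ∈ 𝒜, K.Nonempty → IsFAP 𝒜 fun E => P E K) ∧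
  ∀ E ∈ 𝒜, ∀ F ∈ 𝒜, ∀ K ∈ 𝒜, K.Nonempty → (E ∩ K).Nonempty →
    P (E ∩ F) K = P E K * P F (E ∩ K)

/-- `P` extends the prior `π` on `𝒜L` and the strategy `σ` on `𝒜 × ℒ`. -/
def ExtendsPriorStrategy {ι : Type*} (𝒜 𝒜L : Set (Set Ω)) (H : ι → Set Ω)
    (π : Set Ω → ℝ) (σ : Set Ω → ι → ℝ) (P : Set Ω → Set Ω → ℝ) : Prop :=
  (∀ B ∈ 𝒜L, P B Set.univ = π B) ∧ ∀ F ∈ 𝒜, ∀ i, P F (H i) = σ F i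

/-- The set `𝒫` of full conditional probabilities on `𝒜` extending `{π, σ}`. -/
def FCPSet {ι : Type*} (𝒜 𝒜L : Set (Set Ω)) (H : ι → Set Ω)
    (π : Set Ω → ℝ) (σ : Set Ω → ι → ℝ) : Set (Set Ω → Set Ω → ℝ) :=
  {P | IsFCP 𝒜 P ∧ ExtendsPriorStrategy 𝒜 𝒜L H π σ P}

/-- Lower envelope of a set of conditional probabilities at `F|K`. -/
noncomputable def lowEnv (Ps : Set (Set Ω → Set Ω → ℝ)) (F K : Set Ω) : ℝ :=
  sInf ((fun P => P F K) '' Ps)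

/-- Upper envelope of a set of conditional probabilities at `F|K`. -/
noncomputable def upEnv (Ps : Set (Set Ω → Set Ω → ℝ)) (F K : Set Ω) : ℝ :=
  sSup ((fun P => P F K) '' Ps)

/-- A finite partition of `Ω` contained in `𝒜L`. -/
def IsFinPart (𝒜L : Set (Set Ω)) (T : Finset (Set Ω)) : Prop :=
  (↑T : Set (Set Ω)) ⊆ 𝒜L ∧ (∀ A ∈ T, (A : Set Ω).Nonempty) ∧
    (∀ A ∈ T, ∀ B ∈ T, A ≠ B → Disjoint A B) ∧ ⋃₀ (↑T : Set (Set Ω)) = Set.univ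

/-- Lower Stieltjes integral of `X : ℒ → ℝ` with respect to `μ` on `𝒜L`. -/
noncomputable def lowerSInt {ι : Type*} (H : ι → Set Ω) (𝒜L : Set (Set Ω))
    (X : ι → ℝ) (μ : Set Ω → ℝ) : ℝ :=
  sSup {x | ∃ T : Finset (Set Ω), IsFinPart 𝒜L T ∧
    x = ∑ A ∈ T, sInf {y | ∃ i, H i ⊆ A ∧ y = X i} * μ A}

/-- Upper Stieltjes integral of `X : ℒ → ℝ` with respect to `μ` on `𝒜L`. -/
noncomputable def upperSInt {ι : Type*} (H : ι → Set Ω) (𝒜L : Set (Set Ω))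
    (X : ι → ℝ) (μ : Set Ω → ℝ) : ℝ :=
  sInf {x | ∃ T : Finset (Set Ω), IsFinPart 𝒜L T ∧
    x = ∑ A ∈ T, sSup {y | ∃ i, H i ⊆ A ∧ y = X i} * μ A}

/-- `𝒜L`-continuity of a bounded function `X : ℒ → ℝ`. -/
def ALContinuous {ι : Type*} (H : ι → Set Ω) (𝒜L : Set (Set Ω)) (X : ι → ℝ) : Prop :=
  (∃ M : ℝ, ∀ i, |X i| ≤ M) ∧ ∀ t : ℝ, ∀ ε > (0 : ℝ), ∃ A ∈ 𝒜L,
    (⋃ i ∈ {i | t + ε ≤ X i}, H i) ⊆ A ∧ A ⊆ ⋃ i ∈ {i | t ≤ X i}, H i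

/-- Countable additivity of `P` on the field `𝒜`. -/
def CountablyAdditiveOn (𝒜 : Set (Set Ω)) (P : Set Ω → ℝ) : Prop :=
  ∀ A : ℕ → Set Ω, (∀ n, A n ∈ 𝒜) → (Pairwise fun m n => Disjoint (A m) (A n)) →
    (⋃ n, A n) ∈ 𝒜 → HasSum (fun n => P (A n)) (P (⋃ n, A n))

/-- A (normalized) capacity on the field `𝒜`. -/
def IsCapacity (𝒜 : Set (Set Ω)) (φ : Set Ω → ℝ) : Prop :=
  φ ∅ = 0 ∧ φ Set.univ = 1 ∧ (∀ A ∈ 𝒜, 0 ≤ φ A ∧ φ A ≤ 1) ∧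
    ∀ A ∈ 𝒜, ∀ B ∈ 𝒜, A ⊆ B → φ A ≤ φ B

/-- Total monotonicity of a capacity `φ` on the field `𝒜`. -/
def TotallyMonotone (𝒜 : Set (Set Ω)) (φ : Set Ω → ℝ) : Prop :=
  ∀ n : ℕ, 2 ≤ n → ∀ A : Fin n → Set Ω, (∀ i, A i ∈ 𝒜) →
    ∑ s ∈ Finset.univ.powerset.filter (fun s : Finset (Fin n) => s.Nonempty),
      (-1 : ℝ) ^ (s.card - 1) * φ (⋂ i ∈ s, A i) ≤ φ (⋃ i, A i)

/-- Restriction of a conditional probability to the domain `𝒜 × ℬ⁰`, viewed as a point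
of the product space `ℝ^(𝒜 × ℬ⁰)`. -/
def restrictPairs (𝒜 ℬ : Set (Set Ω)) (Q : Set Ω → Set Ω → ℝ)
    (p : {p : Set Ω × Set Ω // p.1 ∈ 𝒜 ∧ p.2 ∈ ℬ ∧ p.2.Nonempty}) : ℝ :=
  Q p.val.1 p.val.2

/-- Restriction of a set function to the domain `𝒜`, viewed as a point of `ℝ^𝒜`. -/
def restrictDom (𝒜 : Set (Set Ω)) (μ : Set Ω → ℝ) (A : {A : Set Ω // A ∈ 𝒜}) : ℝ :=
  μ A.val

/-- The field of all unions of members of the partition `H`, i.e. `⟨ℒ⟩*`. -/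
def unionsOf {ι : Type*} (H : ι → Set Ω) : Set (Set Ω) :=
  {A | ∃ S : Set ι, A = ⋃ i ∈ S, H i}

/-- The set `𝒬^fd` of fully ℒ-disintegrable full conditional probabilities on `𝒜`
extending `{π, σ}`. -/
def QfdSet {ι : Type*} (𝒜 𝒜L : Set (Set Ω)) (H : ι → Set Ω)
    (π : Set Ω → ℝ) (σ : Set Ω → ι → ℝ) : Set (Set Ω → Set Ω → ℝ) :=
  {Q | IsFCP 𝒜 Q ∧ ExtendsPriorStrategy 𝒜 𝒜L H π σ Q ∧
    ∀ F ∈ 𝒜, ∀ K ∈ 𝒜L, K.Nonempty →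
      Q F K = lowerSInt H 𝒜L (fun i => σ F i) fun B => Q B K}

/-- The set `𝒬^fsc` of fully strongly ℒ-conglomerable full conditional probabilities
on `𝒜` extending `{π, σ}`. -/
def QfscSet {ι : Type*} (𝒜 𝒜L : Set (Set Ω)) (H : ι → Set Ω)
    (π : Set Ω → ℝ) (σ : Set Ω → ι → ℝ) : Set (Set Ω → Set Ω → ℝ) :=
  {Q | IsFCP 𝒜 Q ∧ ExtendsPriorStrategy 𝒜 𝒜L H π σ Q ∧
    ∀ F ∈ 𝒜, ∀ K ∈ 𝒜L, K.Nonempty → ∀ B ∈ 𝒜L, B.Nonempty → B ⊆ K →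
      Q B K * sInf {x | ∃ i, H i ⊆ B ∧ x = σ F i} ≤ Q (F ∩ B) K ∧
      Q (F ∩ B) K ≤ Q B K * sSup {x | ∃ i, H i ⊆ B ∧ x = σ F i}}

/-- The set `𝒫^sc` of strongly ℒ-conglomerable joint probabilities consistent with `{π, σ}`. -/
def PscSet {ι : Type*} (𝒜 𝒜L : Set (Set Ω)) (H : ι → Set Ω)
    (π : Set Ω → ℝ) (σ : Set Ω → ι → ℝ) : Set (Set Ω → ℝ) :=
  {μ | (∃ P ∈ FCPSet 𝒜 𝒜L H π σ, μ = fun F => P F Set.univ) ∧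
    ∀ F ∈ 𝒜, ∀ B ∈ 𝒜L, B.Nonempty →
      π B * sInf {x | ∃ i, H i ⊆ B ∧ x = σ F i} ≤ μ (F ∩ B) ∧
      μ (F ∩ B) ≤ π B * sSup {x | ∃ i, H i ⊆ B ∧ x = σ F i}}

/-- The set `𝒫^fd` of fully ℒ-disintegrable conditional probabilities on `𝒜 × 𝒜L⁰`
extending `{π, σ}`. -/
def PfdSet {ι : Type*} (𝒜 𝒜L : Set (Set Ω)) (H : ι → Set Ω)
    (π : Set Ω → ℝ) (σ : Set Ω → ι → ℝ) : Set (Set Ω → Set Ω → ℝ) :=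
  {P | (∀ E ∈ 𝒜, ∀ K ∈ 𝒜L, K.Nonempty → P E K = P (E ∩ K) K) ∧
    (∀ K ∈ 𝒜L, K.Nonempty → IsFAP 𝒜 fun E => P E K) ∧
    (∀ E ∈ 𝒜, ∀ F ∈ 𝒜, ∀ K ∈ 𝒜L, K.Nonempty → E ∩ K ∈ 𝒜L → (E ∩ K).Nonempty →
      P (E ∩ F) K = P E K * P F (E ∩ K)) ∧
    (∀ B ∈ 𝒜L, P B Set.univ = π B) ∧ (∀ F ∈ 𝒜, ∀ i, P F (H i) = σ F i) ∧
    ∀ F ∈ 𝒜, ∀ K ∈ 𝒜L, K.Nonempty →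
      P F K = lowerSInt H 𝒜L (fun i => σ F i) fun B => P B K}

/-- The Choquet integral `C∫ X dφ = ∫₀¹ φ₊((X ≥ t)) dt` of a `[0,1]`-valued `X : ℒ → ℝ`
with respect to a capacity `φ` on `𝒜L`, where `φ₊` is the inner extension of `φ`. -/
noncomputable def choquetInt {ι : Type*} (H : ι → Set Ω) (𝒜L : Set (Set Ω))
    (X : ι → ℝ) (φ : Set Ω → ℝ) : ℝ :=
  ∫ t in (0 : ℝ)..(1 : ℝ),
    sSup {y | ∃ B ∈ 𝒜L, B ⊆ (⋃ i ∈ {i | t ≤ X i}, H i) ∧ y = φ B}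


namespace S4

/-- Nonnegative finitely additive set function on a field. -/
def NNAdd (𝒟 : Set (Set Ω)) (m : Set Ω → ℝ) : Prop :=
  (∀ A ∈ 𝒟, 0 ≤ m A) ∧ ∀ A ∈ 𝒟, ∀ B ∈ 𝒟, Disjoint A B → m (A ∪ B) = m A + m B

lemma sf_empty {𝒟 : Set (Set Ω)} (h : IsSetField 𝒟) : ∅ ∈ 𝒟 := by
  simpa using h.2.1 _ h.1

lemma sf_inter {𝒟 : Set (Set Ω)} (h : IsSetField 𝒟) {A B : Set Ω}
    (hA : A ∈ 𝒟) (hB : B ∈ 𝒟) : A ∩ B ∈ 𝒟 := by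
  have := h.2.1 _ (h.2.2 _ (h.2.1 _ hA) _ (h.2.1 _ hB))
  simpa [Set.compl_union] using this

lemma sf_diff {𝒟 : Set (Set Ω)} (h : IsSetField 𝒟) {A B : Set Ω}
    (hA : A ∈ 𝒟) (hB : B ∈ 𝒟) : A \ B ∈ 𝒟 := by
  have := sf_inter h hA (h.2.1 _ hB)
  simpa [Set.diff_eq] using this

lemma sf_biUnion {𝒟 : Set (Set Ω)} (h : IsSetField 𝒟) {β : Type*} {s : Finset β}
    {f : β → Set Ω} (hf : ∀ b ∈ s, f b ∈ 𝒟) : (⋃ b ∈ s, f b) ∈ 𝒟 := by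
  classical
  induction s using Finset.induction_on with
  | empty => simpa using sf_empty h
  | @insert a s ha ih =>
    rw [Finset.set_biUnion_insert]
    exact h.2.2 _ (hf a (Finset.mem_insert_self a s)) _
      (ih fun b hbs => hf b (Finset.mem_insert_of_mem hbs))

lemma NNAdd.empty {𝒟 : Set (Set Ω)} {m : Set Ω → ℝ} (h : IsSetField 𝒟)
    (hm : NNAdd 𝒟 m) : m ∅ = 0 := by
  have := hm.2 ∅ (sf_empty h) ∅ (sf_empty h) (by simp)
  simp at this; linarith

lemma NNAdd.diff_add {𝒟 : Set (Set Ω)} {m : Set Ω → ℝ} (h : IsSetField 𝒟)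
    (hm : NNAdd 𝒟 m) {A B : Set Ω} (hA : A ∈ 𝒟) (hB : B ∈ 𝒟) (hAB : A ⊆ B) :
    m B = m A + m (B \ A) := by
  have hrep : A ∪ (B \ A) = B := Set.union_diff_cancel hAB
  have := hm.2 A hA (B \ A) (sf_diff h hB hA) disjoint_sdiff_right
  rw [hrep] at this
  exact this

lemma NNAdd.mono {𝒟 : Set (Set Ω)} {m : Set Ω → ℝ} (h : IsSetField 𝒟)
    (hm : NNAdd 𝒟 m) {A B : Set Ω} (hA : A ∈ 𝒟) (hB : B ∈ 𝒟) (hAB : A ⊆ B) :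
    m A ≤ m B := by
  have := NNAdd.diff_add h hm hA hB hAB
  have h0 := hm.1 _ (sf_diff h hB hA)
  linarith

lemma NNAdd.inter_eq_zero {𝒟 : Set (Set Ω)} {m : Set Ω → ℝ} (h : IsSetField 𝒟)
    (hm : NNAdd 𝒟 m) {A B : Set Ω} (hA : A ∈ 𝒟) (hB : B ∈ 𝒟) (hBz : m B = 0) :
    m (A ∩ B) = 0 := by
  have h1 := NNAdd.mono h hm (sf_inter h hA hB) hB Set.inter_subset_right
  have h2 := hm.1 _ (sf_inter h hA hB)
  linarith

lemma NNAdd.finset_sum {𝒟 : Set (Set Ω)} {m : Set Ω → ℝ} (h : IsSetField 𝒟)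
    (hm : NNAdd 𝒟 m) {β : Type*} {s : Finset β} {f : β → Set Ω}
    (hf : ∀ b ∈ s, f b ∈ 𝒟)
    (hd : ∀ a ∈ s, ∀ b ∈ s, a ≠ b → Disjoint (f a) (f b)) :
    m (⋃ b ∈ s, f b) = ∑ b ∈ s, m (f b) := by
  classical
  induction s using Finset.induction_on with
  | empty => simpa using NNAdd.empty h hm
  | @insert a s ha ih =>
    rw [Finset.set_biUnion_insert, Finset.sum_insert ha]
    have hdisj : Disjoint (f a) (⋃ b ∈ s, f b) := by
      rw [Set.disjoint_iff_inter_eq_empty]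
      ext x; simp only [Set.mem_inter_iff, Set.mem_iUnion, Set.mem_empty_iff_false,
        iff_false, not_and, exists_prop, not_exists]
      rintro hxa b hbs
      exact fun hxb => (hd a (Finset.mem_insert_self a s) b (Finset.mem_insert_of_mem hbs)
        (by rintro rfl; exact ha hbs)).le_bot ⟨hxa, hxb⟩
    rw [hm.2 _ (hf a (Finset.mem_insert_self a s)) _
      (sf_biUnion h fun b hbs => hf b (Finset.mem_insert_of_mem hbs)) hdisj,
      ih (fun b hbs => hf b (Finset.mem_insert_of_mem hbs))
        (fun x hx y hy => hd x (Finset.mem_insert_of_mem hx) y (Finset.mem_insert_of_mem hy))]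

lemma fap_nnadd {𝒟 : Set (Set Ω)} {m : Set Ω → ℝ} (hm : IsFAP 𝒟 m) : NNAdd 𝒟 m :=
  ⟨fun A hA => (hm.1 A hA).1, hm.2.2⟩

lemma IsFAP.compl {𝒟 : Set (Set Ω)} {m : Set Ω → ℝ} (h : IsSetField 𝒟)
    (hm : IsFAP 𝒟 m) {A : Set Ω} (hA : A ∈ 𝒟) : m Aᶜ = 1 - m A := by
  have := hm.2.2 A hA Aᶜ (h.2.1 _ hA) disjoint_compl_right
  rw [Set.union_compl_self] at this
  rw [hm.2.1] at this; linarith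

end S4

namespace S4

variable {ι : Type*}

section strat

variable {𝒜 : Set (Set Ω)} {H : ι → Set Ω} {σ : Set Ω → ι → ℝ}

lemma strat_zero (h𝒜 : IsSetField 𝒜) (hσ : IsStrategy 𝒜 H σ) {A : Set Ω} {i : ι}
    (hA : A ∈ 𝒜) (hd : A ∩ H i = ∅) : σ A i = 0 := by
  have hsub : H i ⊆ Aᶜ := by
    intro x hx
    intro hxA
    exact absurd (Set.eq_empty_iff_forall_notMem.1 hd x ⟨hxA, hx⟩) (fun h => h)
  have h1 : σ Aᶜ i = 1 := (hσ i).2 Aᶜ (h𝒜.2.1 _ hA) hsub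
  have h2 : σ Aᶜ i = 1 - σ A i := IsFAP.compl h𝒜 (hσ i).1 hA
  linarith

lemma strat_inter_self (h𝒜 : IsSetField 𝒜) (hσ : IsStrategy 𝒜 H σ) {A : Set Ω} {i : ι}
    (hA : A ∈ 𝒜) (hHi : H i ∈ 𝒜) : σ (A ∩ H i) i = σ A i := by
  have hsplit := (hσ i).1.2.2 (A ∩ H i) (sf_inter h𝒜 hA hHi) (A \ H i)
    (sf_diff h𝒜 hA hHi) (Disjoint.mono_left Set.inter_subset_right disjoint_sdiff_right)
  have hrep : (A ∩ H i) ∪ (A \ H i) = A := Set.inter_union_diff A (H i)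
  rw [hrep] at hsplit
  have hz : σ (A \ H i) i = 0 :=
    strat_zero h𝒜 hσ (sf_diff h𝒜 hA hHi) (by ext x; simp [Set.mem_diff])
  linarith

end strat

section step

variable {𝒟 : Set (Set Ω)} {m : Set Ω → ℝ} {X : Set Ω}

/-- Inner value of `m` at an arbitrary set. -/
noncomputable def innV (𝒟 : Set (Set Ω)) (m : Set Ω → ℝ) (S : Set Ω) : ℝ :=
  sSup {x | ∃ B ∈ 𝒟, B ⊆ S ∧ x = m B}

/-- Outer value of `m` at an arbitrary set. -/
noncomputable def outV (𝒟 : Set (Set Ω)) (m : Set Ω → ℝ) (S : Set Ω) : ℝ :=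
  sInf {x | ∃ B ∈ 𝒟, S ⊆ B ∧ x = m B}

lemma innV_set_nonempty (h : IsSetField 𝒟) (S : Set Ω) :
    {x | ∃ B ∈ 𝒟, B ⊆ S ∧ x = m B}.Nonempty :=
  ⟨m ∅, ∅, sf_empty h, Set.empty_subset S, rfl⟩

lemma innV_bddAbove (h : IsSetField 𝒟) (hm : NNAdd 𝒟 m) (S : Set Ω) :
    BddAbove {x | ∃ B ∈ 𝒟, B ⊆ S ∧ x = m B} := by
  refine ⟨m Set.univ, ?_⟩
  rintro x ⟨B, hB, _, rfl⟩
  exact NNAdd.mono h hm hB h.1 (Set.subset_univ B)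

lemma outV_set_nonempty (h : IsSetField 𝒟) (S : Set Ω) :
    {x | ∃ B ∈ 𝒟, S ⊆ B ∧ x = m B}.Nonempty :=
  ⟨m Set.univ, Set.univ, h.1, Set.subset_univ S, rfl⟩

lemma outV_bddBelow (hm : NNAdd 𝒟 m) (S : Set Ω) :
    BddBelow {x | ∃ B ∈ 𝒟, S ⊆ B ∧ x = m B} := by
  refine ⟨0, ?_⟩
  rintro x ⟨B, hB, _, rfl⟩
  exact hm.1 B hB

lemma innV_nonneg (h : IsSetField 𝒟) (hm : NNAdd 𝒟 m) (S : Set Ω) :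
    0 ≤ innV 𝒟 m S := by
  have h0 : m ∅ ∈ {x | ∃ B ∈ 𝒟, B ⊆ S ∧ x = m B} := ⟨∅, sf_empty h, Set.empty_subset S, rfl⟩
  have := le_csSup (innV_bddAbove h hm S) h0
  rw [NNAdd.empty h hm] at this
  exact this

lemma outV_nonneg (h : IsSetField 𝒟) (hm : NNAdd 𝒟 m) (S : Set Ω) :
    0 ≤ outV 𝒟 m S :=
  le_csInf (outV_set_nonempty h S) (by rintro x ⟨B, hB, _, rfl⟩; exact hm.1 B hB)

lemma innV_le_of_subset (h : IsSetField 𝒟) (hm : NNAdd 𝒟 m) {B : Set Ω} {S : Set Ω}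
    (hB : B ∈ 𝒟) (hBS : B ⊆ S) : m B ≤ innV 𝒟 m S :=
  le_csSup (innV_bddAbove h hm S) ⟨B, hB, hBS, rfl⟩

lemma outV_le (hm : NNAdd 𝒟 m) {B : Set Ω} {S : Set Ω}
    (hB : B ∈ 𝒟) (hSB : S ⊆ B) : outV 𝒟 m S ≤ m B :=
  csInf_le (outV_bddBelow hm S) ⟨B, hB, hSB, rfl⟩

lemma outV_empty (h : IsSetField 𝒟) (hm : NNAdd 𝒟 m) : outV 𝒟 m (∅ : Set Ω) = 0 := by
  refine le_antisymm ?_ (outV_nonneg h hm _)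
  have := outV_le hm (sf_empty h) (Set.Subset.refl ∅)
  rw [NNAdd.empty h hm] at this
  exact this

/-- Key identity: on members of the field, inner + outer split equals the measure. -/
lemma innV_add_outV (h : IsSetField 𝒟) (hm : NNAdd 𝒟 m) {B : Set Ω} (hB : B ∈ 𝒟)
    (X : Set Ω) : innV 𝒟 m (B ∩ X) + outV 𝒟 m (B \ X) = m B := by
  apply le_antisymm
  · -- innV ≤ m B - outV
    have h1 : innV 𝒟 m (B ∩ X) ≤ m B - outV 𝒟 m (B \ X) := by
      apply csSup_le (innV_set_nonempty h _)
      rintro x ⟨C, hC, hCs, rfl⟩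
      have hCB : C ⊆ B := hCs.trans Set.inter_subset_left
      have hsplit := NNAdd.diff_add h hm hC hB hCB
      have hBC : B \ X ⊆ B \ C := by
        intro y hy
        exact ⟨hy.1, fun hyC => hy.2 (hCs hyC).2⟩
      have := outV_le hm (sf_diff h hB hC) hBC
      linarith
    linarith
  · -- m B - innV ≤ outV
    have h1 : m B - innV 𝒟 m (B ∩ X) ≤ outV 𝒟 m (B \ X) := by
      apply le_csInf (outV_set_nonempty h _)
      rintro x ⟨D, hD, hDs, rfl⟩
      have hBD : B \ D ⊆ B ∩ X := by
        intro y hy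
        refine ⟨hy.1, ?_⟩
        by_contra hyX
        exact hy.2 (hDs ⟨hy.1, hyX⟩)
      have h2 : m (B \ D) ≤ innV 𝒟 m (B ∩ X) := innV_le_of_subset h hm (sf_diff h hB hD) hBD
      have h3 : m B = m (B ∩ D) + m (B \ D) := by
        have := NNAdd.diff_add h hm (sf_inter h hB hD) hB Set.inter_subset_left
        rw [Set.diff_self_inter] at this
        exact this
      have h4 : m (B ∩ D) ≤ m D := NNAdd.mono h hm (sf_inter h hB hD) hD Set.inter_subset_right
      linarith
    linarith

lemma innV_add (h : IsSetField 𝒟) (hm : NNAdd 𝒟 m) {B₁ B₂ : Set Ω}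
    (hB₁ : B₁ ∈ 𝒟) (hB₂ : B₂ ∈ 𝒟) (X : Set Ω) (hd : Disjoint (B₁ ∩ X) (B₂ ∩ X)) :
    innV 𝒟 m ((B₁ ∪ B₂) ∩ X) = innV 𝒟 m (B₁ ∩ X) + innV 𝒟 m (B₂ ∩ X) := by
  apply le_antisymm
  · apply csSup_le (innV_set_nonempty h _)
    rintro x ⟨C, hC, hCs, rfl⟩
    have hsplit : m C = m (C ∩ B₁) + m (C \ B₁) := by
      have := NNAdd.diff_add h hm (sf_inter h hC hB₁) hC Set.inter_subset_left
      rw [Set.diff_self_inter] at this; exact this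
    have h1 : m (C ∩ B₁) ≤ innV 𝒟 m (B₁ ∩ X) :=
      innV_le_of_subset h hm (sf_inter h hC hB₁)
        (fun y hy => ⟨hy.2, (hCs hy.1).2⟩)
    have h2 : m (C \ B₁) ≤ innV 𝒟 m (B₂ ∩ X) := by
      apply innV_le_of_subset h hm (sf_diff h hC hB₁)
      intro y hy
      have := hCs hy.1
      rcases this.1 with hy1 | hy2
      · exact absurd hy1 hy.2
      · exact ⟨hy2, this.2⟩
    linarith
  · -- superadditive
    rw [← le_sub_iff_add_le]
    apply csSup_le (innV_set_nonempty h _)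
    rintro x ⟨C₁, hC₁, hC₁s, rfl⟩
    rw [le_sub_comm]
    apply csSup_le (innV_set_nonempty h _)
    rintro y ⟨C₂, hC₂, hC₂s, rfl⟩
    rw [le_sub_iff_add_le, add_comm]
    have hdisj : Disjoint C₁ C₂ := hd.mono hC₁s hC₂s
    have := hm.2 C₁ hC₁ C₂ hC₂ hdisj
    have hle : m (C₁ ∪ C₂) ≤ innV 𝒟 m ((B₁ ∪ B₂) ∩ X) := by
      apply innV_le_of_subset h hm (h.2.2 _ hC₁ _ hC₂)
      intro y hy
      rcases hy with hy | hy
      · exact ⟨Or.inl (hC₁s hy).1, (hC₁s hy).2⟩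
      · exact ⟨Or.inr (hC₂s hy).1, (hC₂s hy).2⟩
    linarith

lemma outV_add (h : IsSetField 𝒟) (hm : NNAdd 𝒟 m) {B₁ B₂ : Set Ω}
    (hB₁ : B₁ ∈ 𝒟) (hB₂ : B₂ ∈ 𝒟) (X : Set Ω) (hd : Disjoint (B₁ \ X) (B₂ \ X)) :
    outV 𝒟 m ((B₁ ∪ B₂) \ X) = outV 𝒟 m (B₁ \ X) + outV 𝒟 m (B₂ \ X) := by
  apply le_antisymm
  · -- subadditive
    rw [← sub_le_iff_le_add]
    apply le_csInf (outV_set_nonempty h _)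
    rintro x ⟨D₁, hD₁, hD₁s, rfl⟩
    rw [sub_le_comm]
    apply le_csInf (outV_set_nonempty h _)
    rintro y ⟨D₂, hD₂, hD₂s, rfl⟩
    rw [sub_le_iff_le_add, add_comm]
    have hcover : (B₁ ∪ B₂) \ X ⊆ D₁ ∪ D₂ := by
      intro z hz
      rcases hz.1 with h1 | h2
      · exact Or.inl (hD₁s ⟨h1, hz.2⟩)
      · exact Or.inr (hD₂s ⟨h2, hz.2⟩)
    have h1 : outV 𝒟 m ((B₁ ∪ B₂) \ X) ≤ m (D₁ ∪ D₂) :=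
      outV_le hm (h.2.2 _ hD₁ _ hD₂) hcover
    have h2 : m (D₁ ∪ D₂) ≤ m D₁ + m D₂ := by
      have hsplit := NNAdd.diff_add h hm hD₁ (h.2.2 _ hD₁ _ hD₂) Set.subset_union_left
      have h3 : m ((D₁ ∪ D₂) \ D₁) ≤ m D₂ := by
        apply NNAdd.mono h hm (sf_diff h (h.2.2 _ hD₁ _ hD₂) hD₁) hD₂
        intro z hz
        rcases hz.1 with h | h
        · exact absurd h hz.2
        · exact h
      linarith
    linarith
  · -- superadditive
    apply le_csInf (outV_set_nonempty h _)
    rintro x ⟨D, hD, hDs, rfl⟩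
    have hcov1 : B₁ \ X ⊆ D ∩ B₁ := fun z hz => ⟨hDs ⟨Or.inl hz.1, hz.2⟩, hz.1⟩
    have hcov2 : B₂ \ X ⊆ D \ B₁ := by
      intro z hz
      refine ⟨hDs ⟨Or.inr hz.1, hz.2⟩, fun hzB₁ => ?_⟩
      exact (hd.le_bot ⟨⟨hzB₁, hz.2⟩, hz⟩)
    have h1 : outV 𝒟 m (B₁ \ X) ≤ m (D ∩ B₁) := outV_le hm (sf_inter h hD hB₁) hcov1
    have h2 : outV 𝒟 m (B₂ \ X) ≤ m (D \ B₁) := outV_le hm (sf_diff h hD hB₁) hcov2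
    have h3 : m D = m (D ∩ B₁) + m (D \ B₁) := by
      have := NNAdd.diff_add h hm (sf_inter h hD hB₁) hD Set.inter_subset_left
      rw [Set.diff_self_inter] at this; exact this
    linarith

/-- The field generated by `𝒟 ∪ {X}`. -/
def stepField (𝒟 : Set (Set Ω)) (X : Set Ω) : Set (Set Ω) :=
  {A | ∃ B₁ ∈ 𝒟, ∃ B₂ ∈ 𝒟, A = (B₁ ∩ X) ∪ (B₂ \ X)}

/-- The one-step extension of `m` to `stepField 𝒟 X`. -/
noncomputable def stepM (𝒟 : Set (Set Ω)) (m : Set Ω → ℝ) (X : Set Ω) (A : Set Ω) : ℝ :=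
  innV 𝒟 m (A ∩ X) + outV 𝒟 m (A \ X)

lemma stepField_isField (h : IsSetField 𝒟) (X : Set Ω) : IsSetField (stepField 𝒟 X) := by
  refine ⟨⟨Set.univ, h.1, Set.univ, h.1, by simp [Set.union_comm, Set.inter_union_diff]⟩, ?_, ?_⟩
  · rintro A ⟨B₁, hB₁, B₂, hB₂, rfl⟩
    refine ⟨B₁ᶜ, h.2.1 _ hB₁, B₂ᶜ, h.2.1 _ hB₂, ?_⟩
    ext x
    by_cases hx : x ∈ X <;> simp [hx, Set.mem_diff] <;> tauto
  · rintro A ⟨B₁, hB₁, B₂, hB₂, rfl⟩ A' ⟨B₁', hB₁', B₂', hB₂', rfl⟩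
    refine ⟨B₁ ∪ B₁', h.2.2 _ hB₁ _ hB₁', B₂ ∪ B₂', h.2.2 _ hB₂ _ hB₂', ?_⟩
    ext x
    by_cases hx : x ∈ X <;> simp [hx, Set.mem_diff] <;> tauto

lemma subset_stepField (X : Set Ω) : 𝒟 ⊆ stepField 𝒟 X := by
  intro B hB
  exact ⟨B, hB, B, hB, by simp [Set.inter_union_diff]⟩

lemma mem_stepField_self (h : IsSetField 𝒟) (X : Set Ω) : X ∈ stepField 𝒟 X :=
  ⟨Set.univ, h.1, ∅, sf_empty h, by simp⟩

lemma stepField_inter_X {A : Set Ω} (hA : A ∈ stepField 𝒟 X) :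
    ∃ B₁ ∈ 𝒟, A ∩ X = B₁ ∩ X ∧ ∃ B₂ ∈ 𝒟, A \ X = B₂ \ X := by
  obtain ⟨B₁, hB₁, B₂, hB₂, rfl⟩ := hA
  refine ⟨B₁, hB₁, ?_, B₂, hB₂, ?_⟩
  · ext x; by_cases hx : x ∈ X <;> simp [hx, Set.mem_diff] <;> tauto
  · ext x; by_cases hx : x ∈ X <;> simp [hx, Set.mem_diff] <;> tauto

lemma stepM_extends (h : IsSetField 𝒟) (hm : NNAdd 𝒟 m) {B : Set Ω} (hB : B ∈ 𝒟) :
    stepM 𝒟 m X B = m B := innV_add_outV h hm hB X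

lemma stepM_nonneg (h : IsSetField 𝒟) (hm : NNAdd 𝒟 m) (A : Set Ω) :
    0 ≤ stepM 𝒟 m X A :=
  add_nonneg (innV_nonneg h hm _) (outV_nonneg h hm _)

lemma stepM_add (h : IsSetField 𝒟) (hm : NNAdd 𝒟 m) {A A' : Set Ω}
    (hA : A ∈ stepField 𝒟 X) (hA' : A' ∈ stepField 𝒟 X) (hd : Disjoint A A') :
    stepM 𝒟 m X (A ∪ A') = stepM 𝒟 m X A + stepM 𝒟 m X A' := by
  obtain ⟨B₁, hB₁, hX1, B₂, hB₂, hX2⟩ := stepField_inter_X hA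
  obtain ⟨B₁', hB₁', hX1', B₂', hB₂', hX2'⟩ := stepField_inter_X hA'
  have hu1 : (A ∪ A') ∩ X = (B₁ ∪ B₁') ∩ X := by
    rw [Set.union_inter_distrib_right, Set.union_inter_distrib_right, hX1, hX1']
  have hu2 : (A ∪ A') \ X = (B₂ ∪ B₂') \ X := by
    rw [Set.union_diff_distrib, Set.union_diff_distrib, hX2, hX2']
  have hd1 : Disjoint (B₁ ∩ X) (B₁' ∩ X) := by
    rw [← hX1, ← hX1']
    exact hd.mono Set.inter_subset_left Set.inter_subset_left
  have hd2 : Disjoint (B₂ \ X) (B₂' \ X) := by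
    rw [← hX2, ← hX2']
    exact hd.mono Set.diff_subset Set.diff_subset
  unfold stepM
  rw [hu1, hu2, innV_add h hm hB₁ hB₁' X hd1, outV_add h hm hB₂ hB₂' X hd2,
    ← hX1, ← hX1', ← hX2, ← hX2']
  ring

lemma stepM_self (h : IsSetField 𝒟) (hm : NNAdd 𝒟 m) :
    stepM 𝒟 m X X = innV 𝒟 m X := by
  unfold stepM
  rw [Set.inter_self, Set.diff_self, outV_empty h hm, add_zero]

lemma stepM_nnadd (h : IsSetField 𝒟) (hm : NNAdd 𝒟 m) :
    NNAdd (stepField 𝒟 X) (stepM 𝒟 m X) :=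
  ⟨fun A _ => stepM_nonneg h hm A, fun A hA B hB hd => stepM_add h hm hA hB hd⟩

end step

end S4

namespace S4

section zorn

variable {𝒞 ℬ : Set (Set Ω)} {m : Set Ω → ℝ}

/-- Extension of a nonnegative finitely additive set function from a subfield `ℬ` to the
field `𝒞`, taking the inner value at a designated set `K`. -/
theorem extend_nnadd (h𝒞 : IsSetField 𝒞) (hℬ : IsSetField ℬ) (hsub : ℬ ⊆ 𝒞)
    (hm : NNAdd ℬ m) {K : Set Ω} (hK : K ∈ 𝒞) :
    ∃ m' : Set Ω → ℝ, NNAdd 𝒞 m' ∧ (∀ A ∈ ℬ, m' A = m A) ∧ m' K = innV ℬ m K := by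
  classical
  set 𝒟₁ : Set (Set Ω) := stepField ℬ K with h𝒟₁def
  set m₁ : Set Ω → ℝ := stepM ℬ m K with hm₁def
  have h𝒟₁ : IsSetField 𝒟₁ := stepField_isField hℬ K
  have h𝒟₁sub : 𝒟₁ ⊆ 𝒞 := by
    rintro A ⟨B₁, hB₁, B₂, hB₂, rfl⟩
    exact h𝒞.2.2 _ (sf_inter h𝒞 (hsub hB₁) hK) _ (sf_diff h𝒞 (hsub hB₂) hK)
  have hm₁ : NNAdd 𝒟₁ m₁ := stepM_nnadd hℬ hm
  have hm₁ext : ∀ A ∈ ℬ, m₁ A = m A := fun A hA => stepM_extends hℬ hm hA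
  have hK𝒟₁ : K ∈ 𝒟₁ := mem_stepField_self hℬ K
  have hm₁K : m₁ K = innV ℬ m K := stepM_self hℬ hm
  -- Zorn
  let α := {p : Set (Set Ω) × (Set Ω → ℝ) //
    IsSetField p.1 ∧ 𝒟₁ ⊆ p.1 ∧ p.1 ⊆ 𝒞 ∧ NNAdd p.1 p.2 ∧ ∀ A ∈ 𝒟₁, p.2 A = m₁ A}
  let r : α → α → Prop := fun p q => p.val.1 ⊆ q.val.1 ∧ ∀ A ∈ p.val.1, q.val.2 A = p.val.2 A
  have hbase : α := ⟨(𝒟₁, m₁), h𝒟₁, Set.Subset.refl _, h𝒟₁sub, hm₁, fun A _ => rfl⟩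
  have htrans : ∀ {a b c : α}, r a b → r b c → r a c := by
    rintro a b c ⟨hab, hab2⟩ ⟨hbc, hbc2⟩
    exact ⟨hab.trans hbc, fun A hA => (hbc2 A (hab hA)).trans (hab2 A hA)⟩
  have hchains : ∀ c : Set α, IsChain r c → ∃ ub, ∀ a ∈ c, r a ub := by
    intro c hc
    rcases c.eq_empty_or_nonempty with rfl | ⟨p₀, hp₀⟩
    · exact ⟨hbase, by simp⟩
    set glue : Set Ω → ℝ := fun A =>
      if h : ∃ p : α, p ∈ c ∧ A ∈ p.val.1 then (Classical.choose h).val.2 A else 0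
      with hglue
    have hcons : ∀ q : α, q ∈ c → ∀ A ∈ q.val.1, glue A = q.val.2 A := by
      intro q hq A hA
      have hex : ∃ p : α, p ∈ c ∧ A ∈ p.val.1 := ⟨q, hq, hA⟩
      rw [hglue]
      simp only [dif_pos hex]
      have hps := Classical.choose_spec hex
      rcases eq_or_ne (Classical.choose hex) q with heq | hne
      · rw [heq]
      · rcases hc hps.1 hq hne with hpq | hqp
        · exact (hpq.2 A hps.2).symm
        · exact hqp.2 A hA
    set U : Set (Set Ω) := ⋃ p ∈ c, (p : α).val.1 with hU
    have hmemU : ∀ {A : Set Ω}, A ∈ U ↔ ∃ p : α, p ∈ c ∧ A ∈ p.val.1 := by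
      intro A; rw [hU]; simp
    have hpair : ∀ {A B : Set Ω}, A ∈ U → B ∈ U →
        ∃ q : α, q ∈ c ∧ A ∈ q.val.1 ∧ B ∈ q.val.1 := by
      intro A B hA hB
      obtain ⟨p, hp, hAp⟩ := hmemU.1 hA
      obtain ⟨q, hq, hBq⟩ := hmemU.1 hB
      rcases eq_or_ne p q with rfl | hne
      · exact ⟨p, hp, hAp, hBq⟩
      · rcases hc hp hq hne with hpq | hqp
        · exact ⟨q, hq, hpq.1 hAp, hBq⟩
        · exact ⟨p, hp, hAp, hqp.1 hBq⟩
    have hUfield : IsSetField U := by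
      refine ⟨hmemU.2 ⟨p₀, hp₀, p₀.prop.1.1⟩, ?_, ?_⟩
      · intro A hA
        obtain ⟨p, hp, hAp⟩ := hmemU.1 hA
        exact hmemU.2 ⟨p, hp, p.prop.1.2.1 _ hAp⟩
      · intro A hA B hB
        obtain ⟨q, hq, hAq, hBq⟩ := hpair hA hB
        exact hmemU.2 ⟨q, hq, q.prop.1.2.2 _ hAq _ hBq⟩
    have hUsub : U ⊆ 𝒞 := by
      intro A hA
      obtain ⟨p, hp, hAp⟩ := hmemU.1 hA
      exact p.prop.2.2.1 hAp
    have h𝒟₁U : 𝒟₁ ⊆ U := fun A hA => hmemU.2 ⟨p₀, hp₀, p₀.prop.2.1 hA⟩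
    have hnn : NNAdd U glue := by
      constructor
      · intro A hA
        obtain ⟨p, hp, hAp⟩ := hmemU.1 hA
        rw [hcons p hp A hAp]
        exact p.prop.2.2.2.1.1 A hAp
      · intro A hA B hB hd
        obtain ⟨q, hq, hAq, hBq⟩ := hpair hA hB
        have hABq : A ∪ B ∈ q.val.1 := q.prop.1.2.2 _ hAq _ hBq
        rw [hcons q hq A hAq, hcons q hq B hBq, hcons q hq _ hABq]
        exact q.prop.2.2.2.1.2 A hAq B hBq hd
    have hglue𝒟₁ : ∀ A ∈ 𝒟₁, glue A = m₁ A := by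
      intro A hA
      rw [hcons p₀ hp₀ A (p₀.prop.2.1 hA)]
      exact p₀.prop.2.2.2.2 A hA
    refine ⟨⟨(U, glue), hUfield, h𝒟₁U, hUsub, hnn, hglue𝒟₁⟩, ?_⟩
    intro a ha
    exact ⟨fun A hA => hmemU.2 ⟨a, ha, hA⟩, fun A hA => hcons a ha A hA⟩
  obtain ⟨M, hM⟩ := exists_maximal_of_chains_bounded hchains @htrans
  have hMfield : M.val.1 = 𝒞 := by
    apply Set.Subset.antisymm M.prop.2.2.1
    by_contra hne
    obtain ⟨X, hX𝒞, hXM⟩ : ∃ X, X ∈ 𝒞 ∧ X ∉ M.val.1 := by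
      rcases Set.not_subset.1 hne with ⟨X, hX, hXn⟩
      exact ⟨X, hX, hXn⟩
    have hstepsub : stepField M.val.1 X ⊆ 𝒞 := by
      rintro A ⟨B₁, hB₁, B₂, hB₂, rfl⟩
      exact h𝒞.2.2 _ (sf_inter h𝒞 (M.prop.2.2.1 hB₁) hX𝒞) _
        (sf_diff h𝒞 (M.prop.2.2.1 hB₂) hX𝒞)
    let hnext : α := ⟨(stepField M.val.1 X, stepM M.val.1 M.val.2 X),
      stepField_isField M.prop.1 X,
      fun A hA => subset_stepField X (M.prop.2.1 hA),
      hstepsub,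
      stepM_nnadd M.prop.1 M.prop.2.2.2.1,
      fun A hA => by
        show stepM M.val.1 M.val.2 X A = m₁ A
        rw [stepM_extends M.prop.1 M.prop.2.2.2.1 (M.prop.2.1 hA)]
        exact M.prop.2.2.2.2 A hA⟩
    have hrM : r M hnext := by
      refine ⟨fun A hA => subset_stepField X hA, fun A hA => ?_⟩
      show stepM M.val.1 M.val.2 X A = M.val.2 A
      exact stepM_extends M.prop.1 M.prop.2.2.2.1 hA
    have h2 := hM hnext hrM
    exact hXM (h2.1 (mem_stepField_self M.prop.1 X))
  refine ⟨M.val.2, ?_, ?_, ?_⟩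
  · have := M.prop.2.2.2.1; rwa [hMfield] at this
  · intro A hA
    rw [M.prop.2.2.2.2 A (subset_stepField K hA)]
    exact hm₁ext A hA
  · rw [M.prop.2.2.2.2 K hK𝒟₁]
    exact hm₁K

end zorn

end S4

namespace S4

section wf

/-- Minimum of a nonempty set with respect to a fixed well-ordering of the type. -/
noncomputable def wfmin {β : Type*} (s : Set β) (h : s.Nonempty) : β :=
  (IsWellFounded.wf (r := @WellOrderingRel β)).min s h

lemma wfmin_mem {β : Type*} (s : Set β) (h : s.Nonempty) : wfmin s h ∈ s :=
  (IsWellFounded.wf (r := @WellOrderingRel β)).min_mem s h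

lemma wfmin_congr {β : Type*} {s t : Set β} (hs : s.Nonempty) (ht : t.Nonempty)
    (hst : s ⊆ t) (h : wfmin t ht ∈ s) : wfmin s hs = wfmin t ht := by
  have h1 : ¬ WellOrderingRel (wfmin t ht) (wfmin s hs) :=
    (IsWellFounded.wf (r := @WellOrderingRel β)).not_lt_min s h
  have h2 : ¬ WellOrderingRel (wfmin s hs) (wfmin t ht) :=
    (IsWellFounded.wf (r := @WellOrderingRel β)).not_lt_min t (hst (wfmin_mem s hs))
  rcases trichotomous_of WellOrderingRel (wfmin s hs) (wfmin t ht) with h' | h' | h'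
  · exact absurd h' h2
  · exact h'
  · exact absurd h' h1

end wf

section dirac

/-- Dirac measure at a point, as a set function. -/
noncomputable def dirac (ω : Ω) (A : Set Ω) : ℝ := if ω ∈ A then 1 else 0

lemma dirac_nnadd (𝒟 : Set (Set Ω)) (ω : Ω) : NNAdd 𝒟 (dirac ω) := by
  constructor
  · intro A _; unfold dirac; split <;> norm_num
  · intro A _ B _ hd
    unfold dirac
    by_cases hA : ω ∈ A <;> by_cases hB : ω ∈ B
    · exact absurd (hd.le_bot ⟨hA, hB⟩) (fun h => h)
    all_goals simp [hA, hB]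

end dirac

section master

variable {ι : Type*} {𝒜 𝒜L : Set (Set Ω)} {H : ι → Set Ω} {π : Set Ω → ℝ}
  {σ : Set Ω → ι → ℝ}

/-- The master construction: a full conditional probability extending `{π, σ}`,
built from a joint unconditional probability `μ₀` and two auxiliary "priority"
measures `ρ₁`, `ρ₂`, with explicit values on conditioning events where one of
the priority levels is the first positive one. -/
theorem master (h𝒜 : IsSetField 𝒜) (hH : IsPartition H) (hHmem : ∀ i, H i ∈ 𝒜)
    (hσ : IsStrategy 𝒜 H σ)
    (μ₀ ρ₁ ρ₂ : Set Ω → ℝ) (hμ₀ : NNAdd 𝒜 μ₀) (hμ₀u : 0 < μ₀ Set.univ)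
    (hdis : ∀ i, ∀ A ∈ 𝒜, μ₀ (A ∩ H i) = μ₀ (H i) * σ A i)
    (hρ₁ : NNAdd 𝒜 ρ₁) (hρ₂ : NNAdd 𝒜 ρ₂)
    (hc₁ : ∀ j, μ₀ (H j) = 0 → 0 < ρ₁ (H j) → ∀ A ∈ 𝒜, ρ₁ (A ∩ H j) = ρ₁ (H j) * σ A j)
    (hc₂ : ∀ j, μ₀ (H j) = 0 → ρ₁ (H j) = 0 → 0 < ρ₂ (H j) →
      ∀ A ∈ 𝒜, ρ₂ (A ∩ H j) = ρ₂ (H j) * σ A j) :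
    ∃ P : Set Ω → Set Ω → ℝ, IsFCP 𝒜 P ∧
      (∀ B : Set Ω, P B Set.univ = μ₀ B / μ₀ Set.univ) ∧
      (∀ F ∈ 𝒜, ∀ i, P F (H i) = σ F i) ∧
      (∀ F K : Set Ω,
        (0 < μ₀ K → P F K = μ₀ (F ∩ K) / μ₀ K) ∧
        (μ₀ K = 0 → 0 < ρ₁ K → P F K = ρ₁ (F ∩ K) / ρ₁ K) ∧
        (μ₀ K = 0 → ρ₁ K = 0 → 0 < ρ₂ K → P F K = ρ₂ (F ∩ K) / ρ₂ K)) := by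
  classical
  -- the selected measure for each conditioning event
  set sel : Set Ω → (Set Ω → ℝ) := fun K =>
    if 0 < μ₀ K then μ₀
    else if 0 < ρ₁ K then ρ₁
    else if 0 < ρ₂ K then ρ₂
    else if h : {i | 0 < σ K i}.Nonempty then (fun A => σ A (wfmin _ h))
    else if h2 : K.Nonempty then dirac (wfmin K h2)
    else μ₀
    with hsel
  set P : Set Ω → Set Ω → ℝ := fun F K => sel K (F ∩ K) / sel K K with hP
  -- basic facts
  have hselnn : ∀ K, NNAdd 𝒜 (sel K) := by
    intro K
    rw [hsel]
    dsimp only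
    split
    · exact hμ₀
    split
    · exact hρ₁
    split
    · exact hρ₂
    split
    · exact fap_nnadd (hσ _).1
    split
    · exact dirac_nnadd 𝒜 _
    · exact hμ₀
  have hselpos : ∀ K, K ∈ 𝒜 → K.Nonempty → 0 < sel K K := by
    intro K hK hKne
    rw [hsel]
    dsimp only
    by_cases h1 : 0 < μ₀ K
    · rw [if_pos h1]; exact h1
    rw [if_neg h1]
    by_cases h2 : 0 < ρ₁ K
    · rw [if_pos h2]; exact h2
    rw [if_neg h2]
    by_cases h3 : 0 < ρ₂ K
    · rw [if_pos h3]; exact h3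
    rw [if_neg h3]
    by_cases h4 : {i | 0 < σ K i}.Nonempty
    · rw [dif_pos h4]; exact wfmin_mem _ h4
    rw [dif_neg h4, dif_pos hKne]
    unfold dirac
    rw [if_pos (wfmin_mem K hKne)]
    norm_num
  -- zero-propagation: positivity of a level at a subset implies positivity at the superset
  have hmono : ∀ (μ : Set Ω → ℝ), NNAdd 𝒜 μ → ∀ {A B : Set Ω}, A ∈ 𝒜 → B ∈ 𝒜 →
      A ⊆ B → ¬ 0 < μ B → ¬ 0 < μ A := by
    intro μ hμ A B hA hB hAB hnB hpA
    exact hnB (lt_of_lt_of_le hpA (NNAdd.mono h𝒜 hμ hA hB hAB))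
  have hselcoh : ∀ E K : Set Ω, E ∈ 𝒜 → K ∈ 𝒜 → K.Nonempty →
      0 < sel K (E ∩ K) → sel (E ∩ K) = sel K := by
    intro E K hE hK hKne hpos
    have hEK : E ∩ K ∈ 𝒜 := sf_inter h𝒜 hE hK
    have hsub : E ∩ K ⊆ K := Set.inter_subset_right
    rw [hsel]
    dsimp only
    by_cases h1 : 0 < μ₀ K
    · -- sel K = μ₀
      rw [hsel] at hpos; dsimp only at hpos; rw [if_pos h1] at hpos
      rw [if_pos hpos, if_pos h1]
    rw [hsel] at hpos; dsimp only at hpos; rw [if_neg h1] at hpos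
    have h1' : ¬ 0 < μ₀ (E ∩ K) := hmono μ₀ hμ₀ hEK hK hsub h1
    by_cases h2 : 0 < ρ₁ K
    · rw [if_pos h2] at hpos
      rw [if_neg h1', if_pos hpos, if_neg h1, if_pos h2]
    rw [if_neg h2] at hpos
    have h2' : ¬ 0 < ρ₁ (E ∩ K) := hmono ρ₁ hρ₁ hEK hK hsub h2
    by_cases h3 : 0 < ρ₂ K
    · rw [if_pos h3] at hpos
      rw [if_neg h1', if_neg h2', if_pos hpos, if_neg h1, if_neg h2, if_pos h3]
    rw [if_neg h3] at hpos
    have h3' : ¬ 0 < ρ₂ (E ∩ K) := hmono ρ₂ hρ₂ hEK hK hsub h3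
    by_cases h4 : {i | 0 < σ K i}.Nonempty
    · rw [dif_pos h4] at hpos
      have h4' : {i | 0 < σ (E ∩ K) i}.Nonempty := ⟨wfmin _ h4, hpos⟩
      have hss : {i | 0 < σ (E ∩ K) i} ⊆ {i | 0 < σ K i} := by
        intro i hi
        by_contra hni
        exact (hmono (fun A => σ A i) (fap_nnadd (hσ i).1) hEK hK hsub hni) hi
      have := wfmin_congr h4' h4 hss hpos
      rw [if_neg h1', if_neg h2', if_neg h3', dif_pos h4', if_neg h1, if_neg h2,
        if_neg h3, dif_pos h4, this]
    rw [dif_neg h4] at hpos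
    have h4' : ¬ {i | 0 < σ (E ∩ K) i}.Nonempty := by
      rintro ⟨i, hi⟩
      exact h4 ⟨i, by
        by_contra hni
        exact (hmono (fun A => σ A i) (fap_nnadd (hσ i).1) hEK hK hsub hni) hi⟩
    rw [dif_pos hKne] at hpos
    have hw : wfmin K hKne ∈ E ∩ K := by
      by_contra hnw
      unfold dirac at hpos
      rw [if_neg hnw] at hpos
      exact lt_irrefl 0 hpos
    have hEKne : (E ∩ K).Nonempty := ⟨_, hw⟩
    have := wfmin_congr hEKne hKne hsub hw
    rw [if_neg h1', if_neg h2', if_neg h3', dif_neg h4', dif_pos hEKne, if_neg h1,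
      if_neg h2, if_neg h3, dif_neg h4, dif_pos hKne, this]
  -- values on a partition element
  have hselH : ∀ F ∈ 𝒜, ∀ j, P F (H j) = σ F j := by
    intro F hF j
    have hHj : H j ∈ 𝒜 := hHmem j
    have hHjne : (H j).Nonempty := hH.1 j
    have hval : ∀ μ : Set Ω → ℝ, 0 < μ (H j) →
        (∀ A ∈ 𝒜, μ (A ∩ H j) = μ (H j) * σ A j) →
        μ (F ∩ H j) / μ (H j) = σ F j := by
      intro μ hpos hdisμ
      rw [hdisμ F hF, mul_comm, mul_div_assoc, div_self (ne_of_gt hpos), mul_one]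
    rw [hP]
    dsimp only
    have hselfj : sel (H j) (H j) = sel (H j) (H j ∩ H j) := by rw [Set.inter_self]
    rw [hsel]
    dsimp only
    by_cases h1 : 0 < μ₀ (H j)
    · rw [if_pos h1]
      exact hval μ₀ h1 (fun A hA => hdis j A hA)
    rw [if_neg h1]
    have h1z : μ₀ (H j) = 0 := le_antisymm (not_lt.1 h1) (hμ₀.1 _ hHj)
    by_cases h2 : 0 < ρ₁ (H j)
    · rw [if_pos h2]
      exact hval ρ₁ h2 (hc₁ j h1z h2)
    rw [if_neg h2]
    have h2z : ρ₁ (H j) = 0 := le_antisymm (not_lt.1 h2) (hρ₁.1 _ hHj)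
    by_cases h3 : 0 < ρ₂ (H j)
    · rw [if_pos h3]
      exact hval ρ₂ h3 (hc₂ j h1z h2z h3)
    rw [if_neg h3]
    have h4 : {i | 0 < σ (H j) i}.Nonempty := by
      refine ⟨j, ?_⟩
      show 0 < σ (H j) j
      rw [(hσ j).2 (H j) hHj (Set.Subset.refl _)]
      norm_num
    rw [dif_pos h4]
    have hjmem : wfmin _ h4 = j := by
      have hmem := wfmin_mem _ h4
      by_contra hne
      have : σ (H j) (wfmin _ h4) = 0 := by
        apply strat_zero h𝒜 hσ hHj
        rw [Set.inter_comm]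
        exact Set.disjoint_iff_inter_eq_empty.1 (hH.2.1 hne)
      rw [Set.mem_setOf_eq, this] at hmem
      exact lt_irrefl 0 hmem
    rw [hjmem]
    have hone : σ (H j) j = 1 := (hσ j).2 (H j) hHj (Set.Subset.refl _)
    rw [hone, div_one, strat_inter_self h𝒜 hσ hF hHj]
  -- C2
  have hC2 : ∀ K ∈ 𝒜, K.Nonempty → IsFAP 𝒜 fun E => P E K := by
    intro K hK hKne
    have hpos := hselpos K hK hKne
    have hnn := hselnn K
    refine ⟨?_, ?_, ?_⟩
    · intro A hA
      constructor
      · exact div_nonneg (hnn.1 _ (sf_inter h𝒜 hA hK)) (le_of_lt hpos)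
      · rw [hP]; dsimp only
        rw [div_le_one hpos]
        exact NNAdd.mono h𝒜 hnn (sf_inter h𝒜 hA hK) hK Set.inter_subset_right
    · rw [hP]; dsimp only
      rw [Set.univ_inter, div_self (ne_of_gt hpos)]
    · intro A hA B hB hd
      rw [hP]; dsimp only
      rw [Set.union_inter_distrib_right,
        hnn.2 _ (sf_inter h𝒜 hA hK) _ (sf_inter h𝒜 hB hK)
          (hd.mono Set.inter_subset_left Set.inter_subset_left), add_div]
  -- C1
  have hC1 : ∀ E K : Set Ω, P E K = P (E ∩ K) K := by
    intro E K
    rw [hP]; dsimp only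
    rw [Set.inter_assoc, Set.inter_self]
  -- C3
  have hC3 : ∀ E ∈ 𝒜, ∀ F ∈ 𝒜, ∀ K ∈ 𝒜, K.Nonempty → (E ∩ K).Nonempty →
      P (E ∩ F) K = P E K * P F (E ∩ K) := by
    intro E hE F hF K hK hKne hEKne
    have hEK : E ∩ K ∈ 𝒜 := sf_inter h𝒜 hE hK
    have hnn := hselnn K
    by_cases hz : 0 < sel K (E ∩ K)
    · have hcoh := hselcoh E K hE hK hKne hz
      rw [hP]; dsimp only
      rw [hcoh]
      have hKpos := hselpos K hK hKne
      have hset : E ∩ F ∩ K = F ∩ (E ∩ K) := by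
        ext x; simp only [Set.mem_inter_iff]; tauto
      rw [hset]
      field_simp
    · have hz' : sel K (E ∩ K) = 0 := le_antisymm (not_lt.1 hz) (hnn.1 _ hEK)
      have hLHS : sel K (E ∩ F ∩ K) = 0 := by
        have hle : sel K (E ∩ F ∩ K) ≤ sel K (E ∩ K) := by
          apply NNAdd.mono h𝒜 hnn (sf_inter h𝒜 (sf_inter h𝒜 hE hF) hK) hEK
          intro x hx
          exact ⟨hx.1.1, hx.2⟩
        have hge := hnn.1 _ (sf_inter h𝒜 (sf_inter h𝒜 hE hF) hK)
        linarith [hz' ▸ hle]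
      rw [hP]; dsimp only
      rw [hLHS, hz']
      simp
  refine ⟨P, ⟨fun E _ K _ _ => hC1 E K, hC2, hC3⟩, ?_, hselH, ?_⟩
  · intro B
    rw [hP]; dsimp only
    have hseluniv : sel Set.univ = μ₀ := by
      rw [hsel]; dsimp only; rw [if_pos hμ₀u]
    rw [hseluniv, Set.inter_univ]
  · intro F K
    refine ⟨?_, ?_, ?_⟩
    · intro h1
      rw [hP]; dsimp only
      rw [hsel]; dsimp only
      rw [if_pos h1]
    · intro h1 h2
      rw [hP]; dsimp only
      rw [hsel]; dsimp only
      rw [if_neg (by rw [h1]; exact lt_irrefl 0), if_pos h2]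
    · intro h1 h2 h3
      rw [hP]; dsimp only
      rw [hsel]; dsimp only
      rw [if_neg (by rw [h1]; exact lt_irrefl 0), if_neg (by
        rw [h2]; exact lt_irrefl 0), if_pos h3]

end master

end S4

namespace S4

section mu0

variable {ι : Type*} {𝒜 𝒜L : Set (Set Ω)} {H : ι → Set Ω} {π : Set Ω → ℝ}
  {σ : Set Ω → ι → ℝ}

/-- On `𝒜L`, each partition element is inside or disjoint from each member. -/
lemma L_sub_or_disj (hH : IsPartition H) (h𝒜L : IsFieldOver H 𝒜L)
    {B : Set Ω} (hB : B ∈ 𝒜L) (i : ι) : H i ⊆ B ∨ H i ∩ B = ∅ := by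
  obtain ⟨S, rfl⟩ := h𝒜L.2.2 B hB
  by_cases h : (H i ∩ ⋃ j ∈ S, H j) = ∅
  · exact Or.inr h
  · left
    obtain ⟨x, hxi, hxB⟩ := Set.nonempty_iff_ne_empty.2 h
    obtain ⟨j, hjS, hxj⟩ := by simpa using hxB
    have hij : i = j := by
      by_contra hne
      exact (hH.2.1 hne).le_bot ⟨hxi, hxj⟩
    subst hij
    intro y hy
    exact Set.mem_biUnion hjS hy

section atomic

variable (h𝒜 : IsSetField 𝒜) (hH : IsPartition H) (h𝒜L : IsFieldOver H 𝒜L)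
  (hsubL : 𝒜L ⊆ 𝒜) (hπ : IsFAP 𝒜L π) (hσ : IsStrategy 𝒜 H σ)

/-- The atomic part `A ↦ ∑ᵢ π(Hᵢ) σ(A|Hᵢ)`. -/
noncomputable def muAt (H : ι → Set Ω) (π : Set Ω → ℝ) (σ : Set Ω → ι → ℝ)
    (A : Set Ω) : ℝ := ∑' i, π (H i) * σ A i

include h𝒜 hH h𝒜L hsubL hπ hσ

lemma muAt_term_nonneg {A : Set Ω} (hA : A ∈ 𝒜) (i : ι) : 0 ≤ π (H i) * σ A i :=
  mul_nonneg (hπ.1 _ (h𝒜L.2.1 i)).1 ((hσ i).1.1 A hA).1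

lemma muAt_sum_le {A : Set Ω} (hA : A ∈ 𝒜) (u : Finset ι) :
    ∑ i ∈ u, π (H i) * σ A i ≤ 1 := by
  have h1 : ∀ i ∈ u, π (H i) * σ A i ≤ π (H i) := by
    intro i _
    have := ((hσ i).1.1 A hA).2
    have h0 := (hπ.1 _ (h𝒜L.2.1 i)).1
    nlinarith
  calc ∑ i ∈ u, π (H i) * σ A i ≤ ∑ i ∈ u, π (H i) := Finset.sum_le_sum h1
    _ = π (⋃ i ∈ u, H i) := by
        rw [NNAdd.finset_sum h𝒜L.1 (fap_nnadd hπ) (fun i _ => h𝒜L.2.1 i)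
          (fun a _ b _ hab => hH.2.1 hab)]
    _ ≤ π Set.univ := NNAdd.mono h𝒜L.1 (fap_nnadd hπ)
        (sf_biUnion h𝒜L.1 (fun i _ => h𝒜L.2.1 i)) h𝒜L.1.1 (Set.subset_univ _)
    _ = 1 := hπ.2.1

lemma muAt_summable {A : Set Ω} (hA : A ∈ 𝒜) :
    Summable (fun i => π (H i) * σ A i) :=
  summable_of_sum_le (fun i => muAt_term_nonneg h𝒜 hH h𝒜L hsubL hπ hσ hA i)
    (muAt_sum_le h𝒜 hH h𝒜L hsubL hπ hσ hA)

lemma muAt_nnadd : NNAdd 𝒜 (muAt H π σ) := by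
  constructor
  · intro A hA
    exact tsum_nonneg (muAt_term_nonneg h𝒜 hH h𝒜L hsubL hπ hσ hA)
  · intro A hA B hB hd
    unfold muAt
    have h1 : ∀ i, π (H i) * σ (A ∪ B) i = π (H i) * σ A i + π (H i) * σ B i := by
      intro i
      have hadd : σ (A ∪ B) i = σ A i + σ B i := (hσ i).1.2.2 A hA B hB hd
      rw [hadd]; ring
    rw [tsum_congr h1]
    exact Summable.tsum_add (muAt_summable h𝒜 hH h𝒜L hsubL hπ hσ hA)
      (muAt_summable h𝒜 hH h𝒜L hsubL hπ hσ hB)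

lemma muAt_le_pi {B : Set Ω} (hB : B ∈ 𝒜L) : muAt H π σ B ≤ π B := by
  apply Summable.tsum_le_of_sum_le (muAt_summable h𝒜 hH h𝒜L hsubL hπ hσ (hsubL hB))
  intro u
  have h1 : ∀ i ∈ u, π (H i) * σ B i = if H i ⊆ B then π (H i) else 0 := by
    intro i _
    rcases L_sub_or_disj hH h𝒜L hB i with hsub | hdisj
    · rw [if_pos hsub, (hσ i).2 B (hsubL hB) hsub, mul_one]
    · rw [if_neg (fun hsub => ?_), strat_zero h𝒜 hσ (hsubL hB) (by rw [Set.inter_comm]; exact hdisj), mul_zero]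
      obtain ⟨x, hx⟩ := hH.1 i
      exact absurd (Set.eq_empty_iff_forall_notMem.1 hdisj x ⟨hx, hsub hx⟩) not_false
  rw [Finset.sum_congr rfl h1, ← Finset.sum_filter]
  set v := u.filter (fun i => H i ⊆ B) with hv
  have h2 : ∑ i ∈ v, π (H i) = π (⋃ i ∈ v, H i) :=
    (NNAdd.finset_sum h𝒜L.1 (fap_nnadd hπ) (fun i _ => h𝒜L.2.1 i)
      (fun a _ b _ hab => hH.2.1 hab)).symm
  rw [h2]
  apply NNAdd.mono h𝒜L.1 (fap_nnadd hπ) (sf_biUnion h𝒜L.1 (fun i _ => h𝒜L.2.1 i)) hB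
  apply Set.iUnion₂_subset
  intro i hi
  exact (Finset.mem_filter.1 hi).2

lemma muAt_Hi_inter {A : Set Ω} (hA : A ∈ 𝒜) (i : ι) :
    muAt H π σ (A ∩ H i) = π (H i) * σ A i := by
  unfold muAt
  rw [tsum_eq_single i ?h]
  · rw [strat_inter_self h𝒜 hσ hA (hsubL (h𝒜L.2.1 i))]
  case h =>
    intro j hj
    rw [strat_zero h𝒜 hσ (sf_inter h𝒜 hA (hsubL (h𝒜L.2.1 i)))
      (by
        have hdisj : Disjoint (H j) (H i) := hH.2.1 hj
        rw [Set.disjoint_iff_inter_eq_empty] at hdisj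
        rw [Set.inter_assoc, Set.inter_comm (H i) (H j), hdisj, Set.inter_empty]), mul_zero]

lemma muAt_Hi (i : ι) : muAt H π σ (H i) = π (H i) := by
  have h1 : H i ∈ 𝒜 := hsubL (h𝒜L.2.1 i)
  have := muAt_Hi_inter h𝒜 hH h𝒜L hsubL hπ hσ h𝒜.1 i
  rw [Set.univ_inter] at this
  rw [this, (hσ i).2 Set.univ h𝒜.1 (Set.subset_univ _), mul_one]

end atomic

/-- Building the joint unconditional probability `μ₀` disintegrating over the partition,
with value `0` at `K` when the corresponding inner data vanish. -/
theorem build_mu0 (h𝒜 : IsSetField 𝒜) (hH : IsPartition H) (h𝒜L : IsFieldOver H 𝒜L)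
    (hsubL : 𝒜L ⊆ 𝒜) (hπ : IsFAP 𝒜L π) (hσ : IsStrategy 𝒜 H σ)
    {K : Set Ω} (hK : K ∈ 𝒜) :
    ∃ μ₀ : Set Ω → ℝ, NNAdd 𝒜 μ₀ ∧ μ₀ Set.univ = 1 ∧ (∀ B ∈ 𝒜L, μ₀ B = π B) ∧
      (∀ i, ∀ A ∈ 𝒜, μ₀ (A ∩ H i) = μ₀ (H i) * σ A i) ∧
      ((∀ B ∈ 𝒜L, B ⊆ K → π B = 0) → (∀ i, π (H i) * σ K i = 0) → μ₀ K = 0) := by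
  classical
  set dL : Set Ω → ℝ := fun B => π B - muAt H π σ B with hdL
  have hdLnn : NNAdd 𝒜L dL := by
    constructor
    · intro B hB
      have := muAt_le_pi h𝒜 hH h𝒜L hsubL hπ hσ hB
      rw [hdL]; dsimp only; linarith
    · intro A hA B hB hd
      rw [hdL]; dsimp only
      rw [(fap_nnadd hπ).2 A hA B hB hd,
        (muAt_nnadd h𝒜 hH h𝒜L hsubL hπ hσ).2 A (hsubL hA) B (hsubL hB) hd]
      ring
  obtain ⟨dE, hdEnn, hdEext, hdEK⟩ := extend_nnadd h𝒜 h𝒜L.1 hsubL hdLnn hK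
  set μ₀ : Set Ω → ℝ := fun A => muAt H π σ A + dE A with hμ₀
  have hmuA := muAt_nnadd h𝒜 hH h𝒜L hsubL hπ hσ
  have hμ₀nn : NNAdd 𝒜 μ₀ := by
    constructor
    · intro A hA
      exact add_nonneg (hmuA.1 A hA) (hdEnn.1 A hA)
    · intro A hA B hB hd
      rw [hμ₀]; dsimp only
      rw [hmuA.2 A hA B hB hd, hdEnn.2 A hA B hB hd]; ring
  have hμ₀L : ∀ B ∈ 𝒜L, μ₀ B = π B := by
    intro B hB
    rw [hμ₀]; dsimp only
    rw [hdEext B hB, hdL]; dsimp only; ring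
  have hμ₀Hi : ∀ i, μ₀ (H i) = π (H i) := fun i => hμ₀L _ (h𝒜L.2.1 i)
  have hdEHi : ∀ i, dE (H i) = 0 := by
    intro i
    rw [hdEext _ (h𝒜L.2.1 i), hdL]; dsimp only
    rw [muAt_Hi h𝒜 hH h𝒜L hsubL hπ hσ i]; ring
  refine ⟨μ₀, hμ₀nn, by rw [hμ₀L _ h𝒜L.1.1, hπ.2.1], hμ₀L, ?_, ?_⟩
  · intro i A hA
    have hHi𝒜 : H i ∈ 𝒜 := hsubL (h𝒜L.2.1 i)
    have hdE0 : dE (A ∩ H i) = 0 := by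
      have hle := NNAdd.mono h𝒜 hdEnn (sf_inter h𝒜 hA hHi𝒜) hHi𝒜 Set.inter_subset_right
      have hge := hdEnn.1 _ (sf_inter h𝒜 hA hHi𝒜)
      rw [hdEHi i] at hle
      linarith
    rw [hμ₀]; dsimp only
    rw [hdE0, muAt_Hi_inter h𝒜 hH h𝒜L hsubL hπ hσ hA i, add_zero, hdEHi i, add_zero,
      muAt_Hi h𝒜 hH h𝒜L hsubL hπ hσ i]
  · intro hzB hzA
    have h1 : muAt H π σ K = 0 := by
      unfold muAt
      rw [tsum_congr hzA, tsum_zero]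
    have h2 : dE K = 0 := by
      rw [hdEK]
      have hset : {x | ∃ B ∈ 𝒜L, B ⊆ K ∧ x = dL B} = {0} := by
        ext x
        simp only [Set.mem_setOf_eq, Set.mem_singleton_iff]
        constructor
        · rintro ⟨B, hB, hBK, rfl⟩
          have hpz := hzB B hB hBK
          have hle := muAt_le_pi h𝒜 hH h𝒜L hsubL hπ hσ hB
          have hge : 0 ≤ muAt H π σ B := hmuA.1 B (hsubL hB)
          rw [hdL]; dsimp only; linarith
        · rintro rfl
          refine ⟨∅, sf_empty h𝒜L.1, Set.empty_subset K, ?_⟩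
          have hπ0 : π ∅ = 0 := NNAdd.empty h𝒜L.1 (fap_nnadd hπ)
          have hμ0 : muAt H π σ ∅ = 0 := by
            unfold muAt
            rw [tsum_congr (fun i => ?_), tsum_zero]
            rw [strat_zero h𝒜 hσ (sf_empty h𝒜) (Set.empty_inter _), mul_zero]
          rw [hdL]; dsimp only; rw [hπ0, hμ0]; ring
      unfold innV
      rw [hset, csSup_singleton]
    rw [hμ₀]; dsimp only
    rw [h1, h2, add_zero]

end mu0

end S4

namespace S4

section wrap

variable {ι : Type*} {𝒜 𝒜L : Set (Set Ω)} {H : ι → Set Ω} {π : Set Ω → ℝ}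
  {σ : Set Ω → ι → ℝ}

variable (h𝒜f : IsSetField 𝒜) (hH : IsPartition H) (h𝒜L : IsFieldOver H 𝒜L)
  (hsubL : 𝒜L ⊆ 𝒜) (hπ : IsFAP 𝒜L π) (hσ : IsStrategy 𝒜 H σ)

include h𝒜f hH h𝒜L hsubL hπ hσ

/-- `FCPSet` is nonempty (Dubins' extension theorem, in the form we need). -/
theorem fcp_nonempty : (FCPSet 𝒜 𝒜L H π σ).Nonempty := by
  obtain ⟨μ₀, hnn, hu, hL, hdis, _⟩ :=
    build_mu0 (K := Set.univ) h𝒜f hH h𝒜L hsubL hπ hσ h𝒜f.1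
  have hu' : 0 < μ₀ Set.univ := by rw [hu]; norm_num
  obtain ⟨P, hfcp, hPuniv, hPH, _⟩ := master h𝒜f hH (fun i => hsubL (h𝒜L.2.1 i)) hσ
    μ₀ μ₀ μ₀ hnn hu' (fun i A hA => hdis i A hA) hnn hnn
    (fun j hz hpos => absurd hpos (by rw [hz]; exact lt_irrefl 0))
    (fun j hz hz' hpos => absurd hpos (by rw [hz']; exact lt_irrefl 0))
  refine ⟨P, hfcp, ?_, hPH⟩
  intro B hB
  rw [hPuniv B, hL B hB, hu, div_one]

/-- Parametric existence of a member of `FCPSet` with prescribed conditional value at `K`,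
when the prior inner/atomic data at `K` vanish. -/
theorem exists_P {K : Set Ω} (hK : K ∈ 𝒜)
    (ρ₁ ρ₂ : Set Ω → ℝ) (hρ₁ : NNAdd 𝒜 ρ₁) (hρ₂ : NNAdd 𝒜 ρ₂)
    (hc₁ : ∀ j, π (H j) = 0 → 0 < ρ₁ (H j) → ∀ A ∈ 𝒜, ρ₁ (A ∩ H j) = ρ₁ (H j) * σ A j)
    (hc₂ : ∀ j, π (H j) = 0 → ρ₁ (H j) = 0 → 0 < ρ₂ (H j) →
      ∀ A ∈ 𝒜, ρ₂ (A ∩ H j) = ρ₂ (H j) * σ A j)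
    (hzB : ∀ B ∈ 𝒜L, B ⊆ K → π B = 0) (hzA : ∀ i, π (H i) * σ K i = 0) :
    ∃ P ∈ FCPSet 𝒜 𝒜L H π σ,
      (∀ F : Set Ω, 0 < ρ₁ K → P F K = ρ₁ (F ∩ K) / ρ₁ K) ∧
      (∀ F : Set Ω, ρ₁ K = 0 → 0 < ρ₂ K → P F K = ρ₂ (F ∩ K) / ρ₂ K) := by
  obtain ⟨μ₀, hnn, hu, hL, hdis, hKz⟩ :=
    build_mu0 (K := K) h𝒜f hH h𝒜L hsubL hπ hσ hK
  have hμK : μ₀ K = 0 := hKz hzB hzA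
  have hu' : 0 < μ₀ Set.univ := by rw [hu]; norm_num
  have hμH : ∀ j, μ₀ (H j) = π (H j) := fun j => hL _ (h𝒜L.2.1 j)
  obtain ⟨P, hfcp, hPuniv, hPH, hval⟩ := master h𝒜f hH (fun i => hsubL (h𝒜L.2.1 i)) hσ
    μ₀ ρ₁ ρ₂ hnn hu' (fun i A hA => hdis i A hA) hρ₁ hρ₂
    (fun j hz hpos => hc₁ j (by rw [← hμH j]; exact hz) hpos)
    (fun j hz hz' hpos => hc₂ j (by rw [← hμH j]; exact hz) hz' hpos)
  refine ⟨P, ⟨hfcp, ?_, hPH⟩, ?_, ?_⟩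
  · intro B hB
    rw [hPuniv B, hL B hB, hu, div_one]
  · intro F hρK
    exact (hval F K).2.1 hμK hρK
  · intro F hρK hρK2
    exact (hval F K).2.2 hμK hρK hρK2

/-- The single-strategy priority measure `σ(·| H i₀)` satisfies the compatibility needed
for the first priority slot. -/
theorem nu_compat (i₀ : ι) :
    ∀ j, π (H j) = 0 → 0 < σ (H j) i₀ →
      ∀ A ∈ 𝒜, σ (A ∩ H j) i₀ = σ (H j) i₀ * σ A j := by
  intro j _ hpos A hA
  have hHj : H j ∈ 𝒜 := hsubL (h𝒜L.2.1 j)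
  rcases eq_or_ne j i₀ with rfl | hne
  · rw [(hσ j).2 (H j) hHj (Set.Subset.refl _), one_mul, strat_inter_self h𝒜f hσ hA hHj]
  · exfalso
    have : σ (H j) i₀ = 0 := by
      apply strat_zero h𝒜f hσ hHj
      have hd : Disjoint (H j) (H i₀) := hH.2.1 hne
      rw [Set.disjoint_iff_inter_eq_empty] at hd
      exact hd
    rw [this] at hpos
    exact lt_irrefl 0 hpos

end wrap

end S4

open S4 in
/-- closed form of `P_*(F|K)` when `P^j_*(K) = 0`. -/
theorem statement4 {Ω ι κ : Type*} [Nonempty Ω] (H : ι → Set Ω) (E : κ → Set Ω)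
    (𝒜L 𝒜E 𝒜 : Set (Set Ω))
    (hH : IsPartition H) (hE : IsPartition E)
    (h𝒜L : IsFieldOver H 𝒜L) (h𝒜E : IsFieldOver E 𝒜E)
    (h𝒜 : IsJointField H E 𝒜L 𝒜E 𝒜)
    (π : Set Ω → ℝ) (hπ : IsFAP 𝒜L π)
    (σ : Set Ω → ι → ℝ) (hσ : IsStrategy 𝒜 H σ)
    (F K : Set Ω) (hF : F ∈ 𝒜) (hK : K ∈ 𝒜) (hKne : K.Nonempty)
    (hFK : F ∩ K ≠ K)
    (hzero : lowEnv (FCPSet 𝒜 𝒜L H π σ) K Set.univ = 0) :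
    (({i | (H i ∩ F ∩ K).Nonempty ∧ (H i ∩ Fᶜ ∩ K).Nonempty}.Nonempty ∧
      {i | H i ∩ F ∩ K = ∅ ∧ (H i ∩ Fᶜ ∩ K).Nonempty} = ∅ ∧
      {i | (H i ∩ F ∩ K).Nonempty ∧ (H i ∩ Fᶜ ∩ K).Nonempty}.Finite ∧
      ∀ i ∈ {i | (H i ∩ F ∩ K).Nonempty ∧ (H i ∩ Fᶜ ∩ K).Nonempty}, 0 < σ K i) →
      lowEnv (FCPSet 𝒜 𝒜L H π σ) F K =
        sInf ((fun i => σ (F ∩ K) i / σ K i) ''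
          {i | (H i ∩ F ∩ K).Nonempty ∧ (H i ∩ Fᶜ ∩ K).Nonempty})) ∧
    (¬({i | (H i ∩ F ∩ K).Nonempty ∧ (H i ∩ Fᶜ ∩ K).Nonempty}.Nonempty ∧
      {i | H i ∩ F ∩ K = ∅ ∧ (H i ∩ Fᶜ ∩ K).Nonempty} = ∅ ∧
      {i | (H i ∩ F ∩ K).Nonempty ∧ (H i ∩ Fᶜ ∩ K).Nonempty}.Finite ∧
      ∀ i ∈ {i | (H i ∩ F ∩ K).Nonempty ∧ (H i ∩ Fᶜ ∩ K).Nonempty}, 0 < σ K i) →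
      lowEnv (FCPSet 𝒜 𝒜L H π σ) F K = 0) := by
  classical
  obtain ⟨h𝒜f, hsubL, hsubE, hatoms⟩ := h𝒜
  set I2 := {i | (H i ∩ F ∩ K).Nonempty ∧ (H i ∩ Fᶜ ∩ K).Nonempty} with hI2def
  set I3 := {i | H i ∩ F ∩ K = ∅ ∧ (H i ∩ Fᶜ ∩ K).Nonempty} with hI3def
  set PP := FCPSet 𝒜 𝒜L H π σ with hPPdef
  have hPne : PP.Nonempty := fcp_nonempty h𝒜f hH h𝒜L hsubL hπ hσ
  have hHmem : ∀ i, H i ∈ 𝒜 := fun i => hsubL (h𝒜L.2.1 i)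
  have hFc : Fᶜ ∈ 𝒜 := h𝒜f.2.1 F hF
  have hFK𝒜 : F ∩ K ∈ 𝒜 := sf_inter h𝒜f hF hK
  have hFcK𝒜 : Fᶜ ∩ K ∈ 𝒜 := sf_inter h𝒜f hFc hK
  have huniv𝒜 : Set.univ ∈ 𝒜 := h𝒜f.1
  have hunivne : (Set.univ : Set Ω).Nonempty := Set.univ_nonempty
  -- membership unfolding
  have hmem : ∀ Pt ∈ PP, IsFCP 𝒜 Pt ∧ ExtendsPriorStrategy 𝒜 𝒜L H π σ Pt := fun Pt hPt => hPt
  -- nonnegativity of values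
  have hval_nn : ∀ Pt ∈ PP, ∀ A ∈ 𝒜, ∀ K' ∈ 𝒜, K'.Nonempty → 0 ≤ Pt A K' :=
    fun Pt hPt A hA K' hK' hK'ne => (((hmem Pt hPt).1.2.1 K' hK' hK'ne).1 A hA).1
  have himgne : ((fun P => P F K) '' PP).Nonempty := hPne.image _
  have himgbdd : BddBelow ((fun P => P F K) '' PP) := by
    refine ⟨0, ?_⟩
    rintro x ⟨Pt, hPt, rfl⟩
    exact hval_nn Pt hPt F hF K hK hKne
  have hlow : lowEnv PP F K = sInf ((fun P => P F K) '' PP) := rfl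
  have hzero' : sInf ((fun P => P K Set.univ) '' PP) = 0 := hzero
  have himgKne : ((fun P => P K Set.univ) '' PP).Nonempty := hPne.image _
  -- π vanishes on 𝒜L-subsets of K
  have hπz : ∀ B ∈ 𝒜L, B ⊆ K → π B = 0 := by
    intro B hB hBK
    have hlb : ∀ x ∈ (fun P => P K Set.univ) '' PP, π B ≤ x := by
      rintro x ⟨Pt, hPt, rfl⟩
      have h1 : Pt B Set.univ = π B := (hmem Pt hPt).2.1 B hB
      have h2 : Pt B Set.univ ≤ Pt K Set.univ :=
        NNAdd.mono h𝒜f (fap_nnadd ((hmem Pt hPt).1.2.1 Set.univ huniv𝒜 hunivne))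
          (hsubL hB) hK hBK
      linarith
    have := le_csInf himgKne hlb
    rw [hzero'] at this
    exact le_antisymm this (hπ.1 B hB).1
  -- atomic products vanish at K
  have hatomz : ∀ i, π (H i) * σ K i = 0 := by
    intro i
    have hlb : ∀ x ∈ (fun P => P K Set.univ) '' PP, π (H i) * σ K i ≤ x := by
      rintro x ⟨Pt, hPt, rfl⟩
      have hC3 := (hmem Pt hPt).1.2.2 (H i) (hHmem i) K hK Set.univ huniv𝒜 hunivne
        (by rw [Set.inter_univ]; exact hH.1 i)
      rw [Set.inter_univ] at hC3
      have he1 : Pt (H i) Set.univ = π (H i) := (hmem Pt hPt).2.1 (H i) (h𝒜L.2.1 i)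
      have he2 : Pt K (H i) = σ K i := (hmem Pt hPt).2.2 K hK i
      have h2 : Pt (H i ∩ K) Set.univ ≤ Pt K Set.univ :=
        NNAdd.mono h𝒜f (fap_nnadd ((hmem Pt hPt).1.2.1 Set.univ huniv𝒜 hunivne))
          (sf_inter h𝒜f (hHmem i) hK) hK Set.inter_subset_right
      rw [hC3, he1, he2] at h2
      exact h2
    have := le_csInf himgKne hlb
    rw [hzero'] at this
    exact le_antisymm this (mul_nonneg (hπ.1 _ (h𝒜L.2.1 i)).1 ((hσ i).1.1 K hK).1)
  -- helper: members with conditional value 0 at K, via a designated point in Fᶜ ∩ K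
  have diracCase : ∀ i₀ : ι, ∀ y : Ω, y ∈ H i₀ ∩ Fᶜ ∩ K → σ K i₀ = 0 →
      ∃ Pt ∈ PP, Pt F K = 0 := by
    intro i₀ y hy hzK
    obtain ⟨Pt, hPtmem, hv1, hv2⟩ := exists_P h𝒜f hH h𝒜L hsubL hπ hσ hK
      (fun A => σ A i₀) (dirac y) (fap_nnadd (hσ i₀).1) (dirac_nnadd 𝒜 y)
      (nu_compat h𝒜f hH h𝒜L hsubL hπ hσ i₀)
      (fun j hπj hρ₁j hρ₂j => by
        exfalso
        have hyj : y ∈ H j := by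
          unfold dirac at hρ₂j
          by_contra hny
          rw [if_neg hny] at hρ₂j
          exact lt_irrefl 0 hρ₂j
        rcases eq_or_ne j i₀ with rfl | hne
        · have h1 : σ (H j) j = 1 := (hσ j).2 (H j) (hHmem j) (Set.Subset.refl _)
          have h0 : σ (H j) j = 0 := hρ₁j
          rw [h1] at h0
          norm_num at h0
        · exact (hH.2.1 hne).le_bot ⟨hyj, hy.1.1⟩)
      hπz hatomz
    refine ⟨Pt, hPtmem, ?_⟩
    rw [hv2 F hzK (by unfold dirac; rw [if_pos hy.2]; norm_num)]
    unfold dirac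
    rw [if_pos hy.2, if_neg (fun hyFK => hy.1.2 hyFK.1), zero_div]
  have ratioCase : ∀ i₀ : ι, H i₀ ∩ F ∩ K = ∅ → 0 < σ K i₀ →
      ∃ Pt ∈ PP, Pt F K = 0 := by
    intro i₀ hdisj hposK
    obtain ⟨Pt, hPtmem, hv1, hv2⟩ := exists_P h𝒜f hH h𝒜L hsubL hπ hσ hK
      (fun A => σ A i₀) (fun A => σ A i₀) (fap_nnadd (hσ i₀).1) (fap_nnadd (hσ i₀).1)
      (nu_compat h𝒜f hH h𝒜L hsubL hπ hσ i₀)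
      (fun j hπj hρ₁j hρ₂j => absurd hρ₂j (by rw [hρ₁j]; exact lt_irrefl 0))
      hπz hatomz
    refine ⟨Pt, hPtmem, ?_⟩
    rw [hv1 F hposK]
    have hz : σ (F ∩ K) i₀ = 0 := by
      apply strat_zero h𝒜f hσ hFK𝒜
      rw [← hdisj]
      ext x; simp only [Set.mem_inter_iff, Set.mem_empty_iff_false]; tauto
    rw [hz, zero_div]
  constructor
  · -- CASE 1
    rintro ⟨h2ne, h3e, h2fin, hposK⟩
    set R := (fun i => σ (F ∩ K) i / σ K i) '' I2 with hRdef
    have hRne : R.Nonempty := h2ne.image _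
    have hRfin : R.Finite := h2fin.image _
    have hRbdd : BddBelow R := hRfin.bddBelow
    set m := sInf R with hmdef
    obtain ⟨istar, histar, hival0⟩ := hRne.csInf_mem hRfin
    have hival : σ (F ∩ K) istar / σ K istar = m := hival0
    have hratio_le_one : ∀ i ∈ I2, σ (F ∩ K) i ≤ σ K i := by
      intro i _
      exact NNAdd.mono h𝒜f (fap_nnadd (hσ i).1) hFK𝒜 hK Set.inter_subset_right
    have hm_le : ∀ i ∈ I2, m ≤ σ (F ∩ K) i / σ K i := by
      intro i hi
      exact csInf_le hRbdd (Set.mem_image_of_mem _ hi)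
    -- lower bound: every member's value is at least m
    have hlower : ∀ Pt ∈ PP, m ≤ Pt F K := by
      intro Pt hPt
      have hfap : IsFAP 𝒜 (fun E => Pt E K) := (hmem Pt hPt).1.2.1 K hK hKne
      have hfapnn := fap_nnadd hfap
      set t : Finset ι := h2fin.toFinset with htdef
      have hmemt : ∀ i, i ∈ t ↔ i ∈ I2 := fun i => h2fin.mem_toFinset
      have hcover : Fᶜ ∩ K = ⋃ i ∈ t, (Fᶜ ∩ K ∩ H i) := by
        ext x
        constructor
        · intro hx
          have hxu : x ∈ ⋃ i, H i := by rw [hH.2.2]; exact Set.mem_univ x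
          obtain ⟨i, hxi⟩ := Set.mem_iUnion.1 hxu
          have hi2 : i ∈ I2 := by
            have hne2 : (H i ∩ Fᶜ ∩ K).Nonempty := ⟨x, ⟨⟨hxi, hx.1⟩, hx.2⟩⟩
            by_contra hni
            have hi3 : i ∈ I3 := by
              refine ⟨?_, hne2⟩
              by_contra hne1
              exact hni ⟨Set.nonempty_iff_ne_empty.2 hne1, hne2⟩
            rw [h3e] at hi3
            exact hi3
          exact Set.mem_biUnion ((hmemt i).2 hi2) ⟨hx, hxi⟩
        · intro hx
          obtain ⟨i, _, hxi⟩ := Set.mem_iUnion₂.1 hx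
          exact hxi.1
      have hsum : Pt (Fᶜ ∩ K) K = ∑ i ∈ t, Pt (Fᶜ ∩ K ∩ H i) K := by
        conv_lhs => rw [hcover]
        exact NNAdd.finset_sum h𝒜f hfapnn
          (fun i _ => sf_inter h𝒜f hFcK𝒜 (hHmem i))
          (fun a _ b _ hab =>
            ((hH.2.1 hab).mono Set.inter_subset_right Set.inter_subset_right))
      have hterm : ∀ i ∈ t, Pt (Fᶜ ∩ K ∩ H i) K ≤ Pt (H i) K * (1 - m) := by
        intro i hit
        have hi2 : i ∈ I2 := (hmemt i).1 hit
        have hHiK_ne : (H i ∩ K).Nonempty := by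
          obtain ⟨x, hx⟩ := hi2.1
          exact ⟨x, hx.1.1, hx.2⟩
        have hKHi_ne : (K ∩ H i).Nonempty := by
          obtain ⟨x, hx1, hx2⟩ := hHiK_ne
          exact ⟨x, hx2, hx1⟩
        -- conditional of Fᶜ given H i ∩ K
        have hC3b := (hmem Pt hPt).1.2.2 K hK Fᶜ hFc (H i) (hHmem i) (hH.1 i) hKHi_ne
        have heb1 : Pt (K ∩ Fᶜ) (H i) = σ (K ∩ Fᶜ) i := (hmem Pt hPt).2.2 _ (sf_inter h𝒜f hK hFc) i
        have heb2 : Pt K (H i) = σ K i := (hmem Pt hPt).2.2 K hK i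
        have hsigadd : σ K i = σ (F ∩ K) i + σ (Fᶜ ∩ K) i := by
          have hd : Disjoint (F ∩ K) (Fᶜ ∩ K) :=
            (disjoint_compl_right).mono Set.inter_subset_left Set.inter_subset_left
          have := (hσ i).1.2.2 (F ∩ K) hFK𝒜 (Fᶜ ∩ K) hFcK𝒜 hd
          have hun : (F ∩ K) ∪ (Fᶜ ∩ K) = K := by
            ext x; by_cases hxF : x ∈ F <;> simp [hxF]
          rw [hun] at this
          exact this
        have hKFc : K ∩ Fᶜ = Fᶜ ∩ K := Set.inter_comm K Fᶜ
        have hposKi : 0 < σ K i := hposK i hi2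
        have hcondFc : Pt Fᶜ (K ∩ H i) = σ (Fᶜ ∩ K) i / σ K i := by
          rw [heb1, heb2, hKFc] at hC3b
          field_simp
          linarith [hC3b]
        -- decomposition of the term via C3 at conditioning K
        have hC3a := (hmem Pt hPt).1.2.2 (H i) (hHmem i) Fᶜ hFc K hK hKne hHiK_ne
        have hC1a : Pt (H i ∩ Fᶜ) K = Pt ((H i ∩ Fᶜ) ∩ K) K :=
          (hmem Pt hPt).1.1 _ (sf_inter h𝒜f (hHmem i) hFc) K hK hKne
        have hseteq : (H i ∩ Fᶜ) ∩ K = Fᶜ ∩ K ∩ H i := by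
          ext x; simp only [Set.mem_inter_iff]; tauto
        have hseteq2 : H i ∩ K = K ∩ H i := Set.inter_comm _ _
        have hterm_eq : Pt (Fᶜ ∩ K ∩ H i) K = Pt (H i) K * (σ (Fᶜ ∩ K) i / σ K i) := by
          rw [← hseteq, ← hC1a, hC3a, hseteq2, hcondFc]
        rw [hterm_eq]
        apply mul_le_mul_of_nonneg_left _ (hval_nn Pt hPt (H i) (hHmem i) K hK hKne)
        have h1 : σ (Fᶜ ∩ K) i / σ K i = 1 - σ (F ∩ K) i / σ K i := by
          field_simp
          linarith [hsigadd]
        rw [h1]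
        have := hm_le i hi2
        linarith
      have hsumH : ∑ i ∈ t, Pt (H i) K ≤ 1 := by
        have heq : ∑ i ∈ t, Pt (H i) K = Pt (⋃ i ∈ t, H i) K :=
          (NNAdd.finset_sum h𝒜f hfapnn (fun i _ => hHmem i)
            (fun a _ b _ hab => hH.2.1 hab)).symm
        rw [heq]
        exact ((hfap.1 _ (sf_biUnion h𝒜f fun i _ => hHmem i))).2
      have hm1 : m ≤ 1 := by
        rw [← hival]
        rw [div_le_one (hposK istar histar)]
        exact hratio_le_one istar histar
      have hbound : Pt (Fᶜ ∩ K) K ≤ 1 - m := by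
        rw [hsum]
        calc ∑ i ∈ t, Pt (Fᶜ ∩ K ∩ H i) K ≤ ∑ i ∈ t, Pt (H i) K * (1 - m) :=
              Finset.sum_le_sum hterm
          _ = (∑ i ∈ t, Pt (H i) K) * (1 - m) := by rw [Finset.sum_mul]
          _ ≤ 1 * (1 - m) := by
              apply mul_le_mul_of_nonneg_right hsumH
              linarith
          _ = 1 - m := one_mul _
      -- Pt F K = 1 - Pt (Fᶜ ∩ K) K
      have hC1F : Pt F K = Pt (F ∩ K) K := (hmem Pt hPt).1.1 F hF K hK hKne
      have hPKK : Pt (F ∩ K) K + Pt (Fᶜ ∩ K) K = 1 := by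
        have hd : Disjoint (F ∩ K) (Fᶜ ∩ K) :=
          (disjoint_compl_right).mono Set.inter_subset_left Set.inter_subset_left
        have hadd : Pt ((F ∩ K) ∪ (Fᶜ ∩ K)) K = Pt (F ∩ K) K + Pt (Fᶜ ∩ K) K :=
          hfap.2.2 (F ∩ K) hFK𝒜 (Fᶜ ∩ K) hFcK𝒜 hd
        have hun : (F ∩ K) ∪ (Fᶜ ∩ K) = K := by
          ext x; by_cases hxF : x ∈ F <;> simp [hxF]
        rw [hun] at hadd
        have hKK : Pt K K = 1 := by
          have hC1u : Pt Set.univ K = Pt (Set.univ ∩ K) K :=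
            (hmem Pt hPt).1.1 Set.univ huniv𝒜 K hK hKne
          rw [Set.univ_inter] at hC1u
          rw [← hC1u]
          exact hfap.2.1
        rw [← hadd]
        exact hKK
      rw [hC1F]
      linarith
    -- attainment
    obtain ⟨Pt, hPtmem, hv1, _⟩ := exists_P h𝒜f hH h𝒜L hsubL hπ hσ hK
      (fun A => σ A istar) (fun A => σ A istar) (fap_nnadd (hσ istar).1)
      (fap_nnadd (hσ istar).1)
      (nu_compat h𝒜f hH h𝒜L hsubL hπ hσ istar)
      (fun j hπj hρ₁j hρ₂j => absurd hρ₂j (by rw [hρ₁j]; exact lt_irrefl 0))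
      hπz hatomz
    have hPval : Pt F K = m := by
      rw [hv1 F (hposK istar histar)]
      exact hival
    rw [hlow]
    apply le_antisymm
    · apply csInf_le himgbdd
      exact ⟨Pt, hPtmem, hPval⟩
    · apply le_csInf himgne
      rintro x ⟨Q, hQ, rfl⟩
      exact hlower Q hQ
  · -- CASE 2
    intro hnot
    have hle0 : ∃ Pt ∈ PP, Pt F K = 0 := by
      by_cases h3 : I3.Nonempty
      · obtain ⟨i₀, h0a, h0b⟩ := h3
        by_cases hσK : 0 < σ K i₀
        · exact ratioCase i₀ h0a hσK
        · obtain ⟨y, hy⟩ := h0b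
          exact diracCase i₀ y hy
            (le_antisymm (not_lt.1 hσK) ((hσ i₀).1.1 K hK).1)
      · have h3e : I3 = ∅ := Set.not_nonempty_iff_eq_empty.1 h3
        have h2ne : I2.Nonempty := by
          have hns : ¬ K ⊆ F := by
            intro hKF
            exact hFK (by rw [Set.inter_eq_right.2 hKF])
          obtain ⟨x, hxK, hxF⟩ := Set.not_subset.1 hns
          have hxu : x ∈ ⋃ i, H i := by rw [hH.2.2]; exact Set.mem_univ x
          obtain ⟨i, hxi⟩ := Set.mem_iUnion.1 hxu
          refine ⟨i, ?_, ⟨x, ⟨⟨hxi, hxF⟩, hxK⟩⟩⟩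
          by_contra hne1
          have hi3 : i ∈ I3 := ⟨Set.not_nonempty_iff_eq_empty.1 hne1, ⟨x, ⟨⟨hxi, hxF⟩, hxK⟩⟩⟩
          rw [h3e] at hi3
          exact hi3
        by_cases hfin : I2.Finite
        · have hexz : ∃ i ∈ I2, σ K i = 0 := by
            by_contra hall
            push_neg at hall
            exact hnot ⟨h2ne, h3e, hfin, fun i hi =>
              lt_of_le_of_ne ((hσ i).1.1 K hK).1 (Ne.symm (hall i hi))⟩
          obtain ⟨i₀, hi₀, hzK⟩ := hexz
          obtain ⟨y, hy⟩ := hi₀.2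
          exact diracCase i₀ y hy hzK
        · -- I2 infinite: ultrafilter construction
          have hinf : I2.Infinite := hfin
          haveI : Infinite ↥I2 := hinf.to_subtype
          set w : ↥I2 → Ω := fun i => (i.prop.2).some with hwdef
          have hw : ∀ i : ↥I2, w i ∈ H ↑i ∩ Fᶜ ∩ K := fun i => (i.prop.2).some_mem
          set U : Ultrafilter ↥I2 := Ultrafilter.of Filter.cofinite with hUdef
          have hUle : (U : Filter ↥I2) ≤ Filter.cofinite := Ultrafilter.of_le _
          set lam : Set Ω → ℝ := fun A => if {i : ↥I2 | w i ∈ A} ∈ U then (1:ℝ) else 0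
            with hlamdef
          have hlamnn : NNAdd 𝒜 lam := by
            constructor
            · intro A _
              rw [hlamdef]; dsimp only; split <;> norm_num
            · intro A _ B _ hd
              have hAB : {i : ↥I2 | w i ∈ A ∪ B} = {i : ↥I2 | w i ∈ A} ∪ {i : ↥I2 | w i ∈ B} := by
                ext i; simp [Set.mem_union]
              have hcond : ({i : ↥I2 | w i ∈ A ∪ B} ∈ U) ↔
                  ({i : ↥I2 | w i ∈ A} ∈ U ∨ {i : ↥I2 | w i ∈ B} ∈ U) := by
                rw [hAB]; exact Ultrafilter.union_mem_iff
              have hnotboth : ¬ ({i : ↥I2 | w i ∈ A} ∈ U ∧ {i : ↥I2 | w i ∈ B} ∈ U) := by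
                rintro ⟨hA, hB⟩
                have hint : {i : ↥I2 | w i ∈ A} ∩ {i : ↥I2 | w i ∈ B} ∈ U :=
                  Filter.inter_mem hA hB
                have hempty : {i : ↥I2 | w i ∈ A} ∩ {i : ↥I2 | w i ∈ B} = ∅ := by
                  ext i
                  simp only [Set.mem_inter_iff, Set.mem_setOf_eq, Set.mem_empty_iff_false,
                    iff_false, not_and]
                  intro h1 h2
                  exact hd.le_bot ⟨h1, h2⟩
                rw [hempty] at hint
                exact Filter.empty_notMem (U : Filter ↥I2) hint
              rw [hlamdef]; dsimp only
              by_cases hA : {i : ↥I2 | w i ∈ A} ∈ U <;>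
                by_cases hB : {i : ↥I2 | w i ∈ B} ∈ U
              · exact absurd ⟨hA, hB⟩ hnotboth
              · rw [if_pos (hcond.2 (Or.inl hA)), if_pos hA, if_neg hB]; norm_num
              · rw [if_pos (hcond.2 (Or.inr hB)), if_neg hA, if_pos hB]; norm_num
              · rw [if_neg (fun h => (hcond.1 h).elim hA hB), if_neg hA, if_neg hB]
                norm_num
          have hlamK : 0 < lam K := by
            rw [hlamdef]; dsimp only
            rw [if_pos]
            · norm_num
            · have : {i : ↥I2 | w i ∈ K} = Set.univ := by
                rw [Set.eq_univ_iff_forall]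
                intro i
                exact (hw i).2
              rw [this]
              exact Filter.univ_mem
          have hlamFK : lam (F ∩ K) = 0 := by
            rw [hlamdef]; dsimp only
            rw [if_neg]
            have : {i : ↥I2 | w i ∈ F ∩ K} = ∅ := by
              ext i
              simp only [Set.mem_setOf_eq, Set.mem_empty_iff_false, iff_false]
              intro hmem'
              exact (hw i).1.2 hmem'.1
            rw [this]
            exact Filter.empty_notMem (U : Filter ↥I2)
          have hlamH : ∀ j, lam (H j) = 0 := by
            intro j
            rw [hlamdef]; dsimp only
            rw [if_neg]
            have hss : {i : ↥I2 | w i ∈ H j}.Subsingleton := by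
              intro i₁ h₁ i₂ h₂
              have e₁ : (i₁ : ι) = j := by
                by_contra hne
                exact (hH.2.1 hne).le_bot ⟨(hw i₁).1.1, h₁⟩
              have e₂ : (i₂ : ι) = j := by
                by_contra hne
                exact (hH.2.1 hne).le_bot ⟨(hw i₂).1.1, h₂⟩
              exact Subtype.ext (e₁.trans e₂.symm)
            have hfinS : {i : ↥I2 | w i ∈ H j}.Finite := hss.finite
            have hcompl : {i : ↥I2 | w i ∈ H j}ᶜ ∈ U := by
              apply hUle
              simp [Filter.mem_cofinite, compl_compl, hfinS]
            exact Ultrafilter.compl_mem_iff_notMem.1 hcompl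
          obtain ⟨Pt, hPtmem, hv1, _⟩ := exists_P h𝒜f hH h𝒜L hsubL hπ hσ hK
            lam lam hlamnn hlamnn
            (fun j hπj hρ₁j => absurd hρ₁j (by rw [hlamH j]; exact lt_irrefl 0))
            (fun j hπj hρ₁j hρ₂j => absurd hρ₂j (by rw [hlamH j]; exact lt_irrefl 0))
            hπz hatomz
          refine ⟨Pt, hPtmem, ?_⟩
          rw [hv1 F hlamK, hlamFK, zero_div]
    obtain ⟨Pt, hPtmem, hPtval⟩ := hle0
    rw [hlow]
    apply le_antisymm
    · apply csInf_le himgbdd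
      exact ⟨Pt, hPtmem, hPtval⟩
    · apply le_csInf himgne
      rintro x ⟨Q, hQ, rfl⟩
      exact hval_nn Q hQ F hF K hK hKne
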